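/- arXiv:2401.10199 — 10 statements merged into one kernel-verified Lean document; each statement's English description precedes it below -/
import Mathlib

section
/- Let A be a unital associative ℝ-algebra and I a two-sided ideal of A such that I is nilpotent (I^N = 0 for some N ≥ 1) and every commutator u·v − v·u (u, v ∈ A) belongs to I. Let q ∈ ℝ with q ∉ {0, 1, −1}, and suppose a, b, c, d ∈ A satisfy the quantum SL(2) relations: a·b = q • (b·a), a·c = q • (c·a), b·c = c·b, b·d = q • (d·b), c·d = q • (d·c), d·a − q⁻¹ • (b·c) = 1, and a·d − q • (b·c) = 1. Then a and d are units of A, and b and c are nilpotent. (This is the algebraic content of the paper's Lemma on elements of a Banach algebra of polynomial growth satisfying the defining relations of SL_q(2,ℝ).) -/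
/-- In a unital associative `ℝ`-algebra with a nilpotent two-sided ideal
containing all commutators, elements `a, b, c, d` satisfying the quantum `SL(2)` relations
with `q ∉ {0, 1, −1}` have the property that `a` and `d` are units and `b` and `c` are
nilpotent. -/
theorem quantum_sl2_units_and_nilpotent
    {A : Type*} [Ring A] [Algebra ℝ A] (I : TwoSidedIdeal A) (N : ℕ) (hN : 1 ≤ N)
    (hnil : ∀ f : Fin N → A, (∀ i, f i ∈ I) → (List.ofFn f).prod = 0)
    (hcomm : ∀ u v : A, u * v - v * u ∈ I)
    (q : ℝ) (hq0 : q ≠ 0) (hq1 : q ≠ 1) (hqm1 : q ≠ -1)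
    (a b c d : A)
    (hab : a * b = q • (b * a)) (hac : a * c = q • (c * a)) (hbc : b * c = c * b)
    (hbd : b * d = q • (d * b)) (hcd : c * d = q • (d * c))
    (hda : d * a - q⁻¹ • (b * c) = 1) (had : a * d - q • (b * c) = 1) :
    IsUnit a ∧ IsUnit d ∧ (∃ n : ℕ, 1 ≤ n ∧ b ^ n = 0) ∧ (∃ n : ℕ, 1 ≤ n ∧ c ^ n = 0) := by
  -- scalar multiples of ideal elements are in the ideal
  have hsmul : ∀ (r : ℝ) (x : A), x ∈ I → r • x ∈ I := by
    intro r x hx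
    rw [Algebra.smul_def]
    exact I.mul_mem_left _ _ hx
  -- elements of I raised to N vanish
  have hpow : ∀ x : A, x ∈ I → x ^ N = 0 := by
    intro x hx
    have := hnil (fun _ => x) (fun _ => hx)
    simpa [List.prod_replicate] using this
  have hInil : ∀ x : A, x ∈ I → IsNilpotent x := fun x hx => ⟨N, hpow x hx⟩
  -- q - q⁻¹ ≠ 0
  have hqq : q - q⁻¹ ≠ 0 := by
    intro h
    have h2 : q * q = 1 := by field_simp at h; linarith [h]
    have : (q - 1) * (q + 1) = 0 := by ring_nf; nlinarith [h2]
    rcases mul_eq_zero.1 this with h' | h'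
    · exact hq1 (by linarith)
    · exact hqm1 (by linarith)
  -- b*c ∈ I
  have hbcI : b * c ∈ I := by
    have h1 : a * d - d * a = (q - q⁻¹) • (b * c) := by
      have hda' : d * a = 1 + q⁻¹ • (b * c) := by linear_combination (norm := module) hda
      have had' : a * d = 1 + q • (b * c) := by linear_combination (norm := module) had
      rw [hda', had', sub_smul]; abel
    have h2 : (q - q⁻¹) • (b * c) ∈ I := h1 ▸ hcomm a d
    have := hsmul (q - q⁻¹)⁻¹ _ h2
    rwa [smul_smul, inv_mul_cancel₀ hqq, one_smul] at this
  -- d*a and a*d are units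
  have hdaU : IsUnit (d * a) := by
    have : d * a = 1 + q⁻¹ • (b * c) := by linear_combination (norm := module) hda
    rw [this]
    exact IsNilpotent.isUnit_one_add (hInil _ (hsmul _ _ hbcI))
  have hadU : IsUnit (a * d) := by
    have : a * d = 1 + q • (b * c) := by linear_combination (norm := module) had
    rw [this]
    exact IsNilpotent.isUnit_one_add (hInil _ (hsmul _ _ hbcI))
  obtain ⟨e, he⟩ := hdaU.exists_left_inv
  obtain ⟨f, hf⟩ := hadU.exists_right_inv
  -- a is a unit: left inverse e*d, right inverse d*f
  have hla : (e * d) * a = 1 := by rw [mul_assoc]; exact he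
  have hra : a * (d * f) = 1 := by rw [← mul_assoc]; exact hf
  have heq : e * d = d * f := by
    calc e * d = (e * d) * (a * (d * f)) := by rw [hra, mul_one]
    _ = ((e * d) * a) * (d * f) := by noncomm_ring
    _ = d * f := by rw [hla, one_mul]
  have haU : IsUnit a := ⟨⟨a, d * f, hra, heq ▸ hla⟩, rfl⟩
  -- d is a unit: left inverse f*a? no: (ad) f' ... use symmetric argument
  obtain ⟨e', he'⟩ := hadU.exists_left_inv
  obtain ⟨f', hf'⟩ := hdaU.exists_right_inv
  have hld : (e' * a) * d = 1 := by rw [mul_assoc]; exact he'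
  have hrd : d * (a * f') = 1 := by rw [← mul_assoc]; exact hf'
  have heq' : e' * a = a * f' := by
    calc e' * a = (e' * a) * (d * (a * f')) := by rw [hrd, mul_one]
    _ = ((e' * a) * d) * (a * f') := by noncomm_ring
    _ = a * f' := by rw [hld, one_mul]
  have hdU : IsUnit d := ⟨⟨d, a * f', hrd, heq' ▸ hld⟩, rfl⟩
  -- b ∈ I and c ∈ I
  obtain ⟨u, hu⟩ := haU
  have hbaI : b * a ∈ I := by
    have h1 : a * b - b * a = (q - 1) • (b * a) := by
      rw [hab, sub_smul, one_smul]
    have h2 : (q - 1) • (b * a) ∈ I := h1 ▸ hcomm a b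
    have := hsmul (q - 1)⁻¹ _ h2
    rwa [smul_smul, inv_mul_cancel₀ (sub_ne_zero.2 hq1), one_smul] at this
  have hcaI : c * a ∈ I := by
    have h1 : a * c - c * a = (q - 1) • (c * a) := by
      rw [hac, sub_smul, one_smul]
    have h2 : (q - 1) • (c * a) ∈ I := h1 ▸ hcomm a c
    have := hsmul (q - 1)⁻¹ _ h2
    rwa [smul_smul, inv_mul_cancel₀ (sub_ne_zero.2 hq1), one_smul] at this
  have hu' : a * (↑u⁻¹ : A) = 1 := by rw [← hu, u.mul_inv]
  have hbI : b ∈ I := by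
    have : (b * a) * (↑u⁻¹ : A) ∈ I := I.mul_mem_right _ _ hbaI
    rwa [mul_assoc, hu', mul_one] at this
  have hcI : c ∈ I := by
    have : (c * a) * (↑u⁻¹ : A) ∈ I := I.mul_mem_right _ _ hcaI
    rwa [mul_assoc, hu', mul_one] at this
  exact ⟨⟨u, hu⟩, hdU, ⟨N, hN, hpow b hbI⟩, ⟨N, hN, hpow c hcI⟩⟩
end

section
/- Let A be a unital associative ℝ-algebra, q ∈ ℝ with q ≠ 0, let a be a unit of A and b, c ∈ A, and suppose a·b = q • (b·a), a·c = q • (c·a), and b·c = c·b. Define d := a⁻¹ · (1 + q • (b·c)). Then b·d = q • (d·b), c·d = q • (d·c), d·a − q⁻¹ • (b·c) = 1, and a·d − q • (b·c) = 1. -/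
/-- Let `A` be a unital associative `ℝ`-algebra, `q ∈ ℝ`, `q ≠ 0`, `a` a
unit of `A` and `b, c ∈ A` with `a·b = q • (b·a)`, `a·c = q • (c·a)`, `b·c = c·b`. Put
`d := a⁻¹ · (1 + q • (b·c))`. Then `b·d = q • (d·b)`, `c·d = q • (d·c)`,
`d·a − q⁻¹ • (b·c) = 1` and `a·d − q • (b·c) = 1`. -/
theorem quantum_sl2_from_three_relations
    {A : Type*} [Ring A] [Algebra ℝ A] (q : ℝ) (hq : q ≠ 0)
    (a : Aˣ) (b c : A)
    (hab : (a : A) * b = q • (b * (a : A)))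
    (hac : (a : A) * c = q • (c * (a : A)))
    (hbc : b * c = c * b) :
    ∀ d : A, d = ((a⁻¹ : Aˣ) : A) * (1 + q • (b * c)) →
      b * d = q • (d * b) ∧ c * d = q • (d * c) ∧
      d * (a : A) - q⁻¹ • (b * c) = 1 ∧ (a : A) * d - q • (b * c) = 1 := by
  intro d hd
  subst hd
  -- b * a⁻¹ = q • (a⁻¹ * b)
  have hbinv : b * ((a⁻¹ : Aˣ) : A) = q • (((a⁻¹ : Aˣ) : A) * b) := by
    have h := congrArg (fun x => ((a⁻¹ : Aˣ) : A) * x * ((a⁻¹ : Aˣ) : A)) hab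
    simpa [mul_assoc, mul_smul_comm, smul_mul_assoc, Units.inv_mul_cancel_left,
      Units.mul_inv_cancel_right] using h
  have hcinv : c * ((a⁻¹ : Aˣ) : A) = q • (((a⁻¹ : Aˣ) : A) * c) := by
    have h := congrArg (fun x => ((a⁻¹ : Aˣ) : A) * x * ((a⁻¹ : Aˣ) : A)) hac
    simpa [mul_assoc, mul_smul_comm, smul_mul_assoc, Units.inv_mul_cancel_left,
      Units.mul_inv_cancel_right] using h
  have habc : (a : A) * (b * c) = (q * q) • (b * c * (a : A)) := by
    rw [← mul_assoc, hab, smul_mul_assoc, mul_assoc, hac, mul_smul_comm, smul_smul,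
      ← mul_assoc]
  have hinvbc : ((a⁻¹ : Aˣ) : A) * (b * c) * (a : A) = (q * q)⁻¹ • (b * c) := by
    have h := congrArg (fun x => ((a⁻¹ : Aˣ) : A) * x) habc
    have h2 : b * c = (q * q) • (((a⁻¹ : Aˣ) : A) * (b * c * (a : A))) := by
      simpa [Units.inv_mul_cancel_left, mul_smul_comm] using h
    have hqq : (q * q) ≠ 0 := mul_ne_zero hq hq
    have h4 := congrArg (fun x => ((q * q)⁻¹ : ℝ) • x) h2
    simpa [smul_smul, inv_mul_cancel₀ hqq, mul_assoc, inv_mul_cancel_left₀ hq,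
      inv_mul_cancel₀ hq] using h4.symm
  refine ⟨?_, ?_, ?_, ?_⟩
  · -- b * d = q • (d * b)
    have hcomm : b * (1 + q • (b * c)) = (1 + q • (b * c)) * b := by
      rw [mul_add, add_mul, mul_one, one_mul, mul_smul_comm, smul_mul_assoc,
        mul_assoc, ← hbc]
    rw [← mul_assoc, hbinv, smul_mul_assoc, mul_assoc, hcomm, ← mul_assoc]
  · have hcomm : c * (1 + q • (b * c)) = (1 + q • (b * c)) * c := by
      rw [mul_add, add_mul, mul_one, one_mul, mul_smul_comm, smul_mul_assoc,
        ← mul_assoc, ← hbc]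
    rw [← mul_assoc, hcinv, smul_mul_assoc, mul_assoc, hcomm, ← mul_assoc]
  · have : ((a⁻¹ : Aˣ) : A) * (1 + q • (b * c)) * (a : A)
        = 1 + q⁻¹ • (b * c) := by
      rw [mul_add, add_mul, mul_one, Units.inv_mul, mul_smul_comm, smul_mul_assoc,
        hinvbc, smul_smul]
      congr 1
      field_simp
    rw [this]; abel
  · rw [← mul_assoc, Units.mul_inv, one_mul]; abel
end

section
/- Let q ∈ ℝ with q ≠ 0, and let A_q be the universal unital ℝ-algebra with generators a, a', b, c and relations a·a' = 1, a'·a = 1, a·b = q • (b·a), a·c = q • (c·a), b·c = c·b (i.e., the quotient of the free ℝ-algebra on four generators by the two-sided ideal generated by these relations; thus a is a unit with inverse a'). Then the family { a^i · b^j · c^k : i ∈ ℤ, j ∈ ℕ, k ∈ ℕ } (where a^i for negative i means (a')^{−i}) is a basis of A_q as an ℝ-vector space; equivalently, the ℝ-linear map from the free ℝ-module on ℤ × ℕ × ℕ to A_q sending the basis vector at (i, j, k) to a^i · b^j · c^k is bijective. -/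
open FreeAlgebra

/-- The defining relations of the algebra `A_q`: generators `a = X 0`, `a' = X 1`,
`b = X 2`, `c = X 3`, with `a·a' = 1`, `a'·a = 1`, `a·b = q • (b·a)`, `a·c = q • (c·a)`,
`b·c = c·b`. -/
inductive AqRel (q : ℝ) : FreeAlgebra ℝ (Fin 4) → FreeAlgebra ℝ (Fin 4) → Prop
  | inv_right : AqRel q (ι ℝ 0 * ι ℝ 1) 1
  | inv_left : AqRel q (ι ℝ 1 * ι ℝ 0) 1
  | ab : AqRel q (ι ℝ 0 * ι ℝ 2) (q • (ι ℝ 2 * ι ℝ 0))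
  | ac : AqRel q (ι ℝ 0 * ι ℝ 3) (q • (ι ℝ 3 * ι ℝ 0))
  | bc : AqRel q (ι ℝ 2 * ι ℝ 3) (ι ℝ 3 * ι ℝ 2)

noncomputable abbrev Aq (q : ℝ) : Type := RingQuot (AqRel q)

/-- The generator `a` of `A_q` as a unit, with inverse `a'`. -/
noncomputable def aUnit (q : ℝ) : (Aq q)ˣ where
  val := RingQuot.mkAlgHom ℝ (AqRel q) (ι ℝ 0)
  inv := RingQuot.mkAlgHom ℝ (AqRel q) (ι ℝ 1)
  val_inv := by
    rw [← map_mul, ← map_one (RingQuot.mkAlgHom ℝ (AqRel q))]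
    exact RingQuot.mkAlgHom_rel ℝ AqRel.inv_right
  inv_val := by
    rw [← map_mul, ← map_one (RingQuot.mkAlgHom ℝ (AqRel q))]
    exact RingQuot.mkAlgHom_rel ℝ AqRel.inv_left

/-!
Surjectivity: the span of the monomials `a^i b^j c^k` contains `1` and is stable under left
multiplication by the four generators, since `b a^i = q^{-i} a^i b`, `c a^i = q^{-i} a^i c` and
`b c = c b`; hence it is the whole algebra. Injectivity: those same formulas define operators on
the free module over `ℤ × ℕ × ℕ` that satisfy the relations of `A_q`, so `A_q` acts on it, and
applying `a^i b^j c^k` to the basis vector at `0` gives the basis vector at `(i, j, k)`.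
-/

theorem mul_pow_of_mul_eq_smul_mul {R A : Type*} [CommSemiring R] [Semiring A] [Algebra R A]
    {x y : A} {r : R} (h : y * x = r • (x * y)) (n : ℕ) :
    y * x ^ n = r ^ n • (x ^ n * y) := by
  induction n with
  | zero => simp
  | succ n ih =>
    rw [pow_succ, ← mul_assoc, ih, smul_mul_assoc, mul_assoc, h, mul_smul_comm, smul_smul,
      pow_succ, ← mul_assoc]

section Units

variable {K A : Type*} [Field K] [Semiring A] [Algebra K A]

theorem mul_inv_of_mul_eq_smul_mul {u : Aˣ} {y : A} {r : K} (hr : r ≠ 0)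
    (h : y * u = r • (u * y)) : y * ↑u⁻¹ = r⁻¹ • (↑u⁻¹ * y) := by
  have hinv : ↑u⁻¹ * y = r • (y * ↑u⁻¹) := by
    calc ↑u⁻¹ * y = ↑u⁻¹ * (y * u) * ↑u⁻¹ := by simp [mul_assoc]
      _ = r • (y * ↑u⁻¹) := by rw [h, mul_smul_comm, smul_mul_assoc]; simp
  rw [hinv, smul_smul, inv_mul_cancel₀ hr, one_smul]

theorem mul_zpow_of_mul_eq_smul_mul {u : Aˣ} {y : A} {r : K} (hr : r ≠ 0)
    (h : y * u = r • (u * y)) (i : ℤ) : y * ↑(u ^ i) = r ^ i • (↑(u ^ i) * y) := by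
  obtain ⟨n, rfl | rfl⟩ := i.eq_nat_or_neg
  · simpa using mul_pow_of_mul_eq_smul_mul h n
  · simpa [← inv_zpow'] using mul_pow_of_mul_eq_smul_mul (mul_inv_of_mul_eq_smul_mul hr h) n

end Units

namespace Submodule

theorem span_eq_top_of_one_mem_of_mul_mem {R A : Type*} [CommSemiring R] [Semiring A]
    [Algebra R A] {s t : Set A} (hs : Algebra.adjoin R s = ⊤) (h1 : 1 ∈ span R t)
    (hmul : ∀ x ∈ s, ∀ v ∈ t, x * v ∈ span R t) : span R t = ⊤ := by
  have hmul_span : ∀ z : A, ∀ v ∈ span R t, z * v ∈ span R t := by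
    intro z
    induction (hs ▸ Algebra.mem_top : z ∈ Algebra.adjoin R s) using Algebra.adjoin_induction with
    | mem x hx =>
      have hle : span R t ≤ (span R t).comap (LinearMap.mulLeft R x) := span_le.mpr (hmul x hx)
      exact fun v hv => hle hv
    | algebraMap r => exact fun v hv => by rw [← Algebra.smul_def]; exact smul_mem _ r hv
    | add x y _ _ hx hy => exact fun v hv => by rw [add_mul]; exact add_mem (hx v hv) (hy v hv)
    | mul x y _ _ hx hy => exact fun v hv => by rw [mul_assoc]; exact hx _ (hy v hv)
  exact eq_top_iff.mpr fun z _ => by simpa using hmul_span z 1 h1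

end Submodule

namespace Finsupp

variable {R α : Type*} [CommSemiring R]

noncomputable def weightedShift (f : α → α) (w : α → R) : Module.End R (α →₀ R) :=
  lsum R fun p => w p • lsingle (f p)

@[simp]
theorem weightedShift_single (f : α → α) (w : α → R) (p : α) (r : R) :
    weightedShift f w (single p r) = single (f p) (w p * r) := by
  simp [weightedShift, smul_single]

theorem weightedShift_mul (f g : α → α) (w v : α → R) :
    weightedShift f w * weightedShift g v = weightedShift (f ∘ g) (fun p => w (g p) * v p) :=
  lhom_ext fun p r => by
    simp only [Module.End.mul_apply, weightedShift_single, Function.comp_apply, mul_assoc]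

theorem weightedShift_id_one : weightedShift (id : α → α) 1 = (1 : Module.End R (α →₀ R)) :=
  lhom_ext fun p r => by simp

theorem smul_weightedShift (c : R) (f : α → α) (w : α → R) :
    c • weightedShift f w = weightedShift f (c • w) :=
  lhom_ext fun p r => by
    simp only [LinearMap.smul_apply, weightedShift_single, smul_single, Pi.smul_apply,
      smul_eq_mul, mul_assoc]

end Finsupp

namespace Aq

open Finsupp

variable (q : ℝ)

noncomputable abbrev b : Aq q := RingQuot.mkAlgHom ℝ (AqRel q) (ι ℝ 2)

noncomputable abbrev c : Aq q := RingQuot.mkAlgHom ℝ (AqRel q) (ι ℝ 3)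

noncomputable def monomial (p : ℤ × ℕ × ℕ) : Aq q :=
  ↑(aUnit q ^ p.1) * b q ^ p.2.1 * c q ^ p.2.2

theorem coe_aUnit : (aUnit q : Aq q) = RingQuot.mkAlgHom ℝ (AqRel q) (ι ℝ 0) := rfl

theorem coe_aUnit_inv : ↑(aUnit q)⁻¹ = RingQuot.mkAlgHom ℝ (AqRel q) (ι ℝ 1) := rfl

theorem adjoin_range_generators :
    Algebra.adjoin ℝ (Set.range fun n : Fin 4 => RingQuot.mkAlgHom ℝ (AqRel q) (ι ℝ n)) = ⊤ := by
  rw [Set.range_comp' (RingQuot.mkAlgHom ℝ (AqRel q)) (ι ℝ), Algebra.adjoin_image,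
    FreeAlgebra.adjoin_range_ι, Algebra.map_top, AlgHom.range_eq_top]
  exact RingQuot.mkAlgHom_surjective ℝ (AqRel q)

variable {q}

theorem b_mul_aUnit (hq : q ≠ 0) : b q * aUnit q = q⁻¹ • (aUnit q * b q) := by
  have hab : (aUnit q * b q : Aq q) = q • (b q * aUnit q) := by
    have h := RingQuot.mkAlgHom_rel ℝ (AqRel.ab (q := q))
    rwa [map_mul, map_smul, map_mul] at h
  rw [hab, smul_smul, inv_mul_cancel₀ hq, one_smul]

theorem c_mul_aUnit (hq : q ≠ 0) : c q * aUnit q = q⁻¹ • (aUnit q * c q) := by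
  have hac : (aUnit q * c q : Aq q) = q • (c q * aUnit q) := by
    have h := RingQuot.mkAlgHom_rel ℝ (AqRel.ac (q := q))
    rwa [map_mul, map_smul, map_mul] at h
  rw [hac, smul_smul, inv_mul_cancel₀ hq, one_smul]

theorem commute_b_c : Commute (b q) (c q) := by
  have h := RingQuot.mkAlgHom_rel ℝ (AqRel.bc (q := q))
  rwa [map_mul, map_mul] at h

theorem monomial_zero : monomial q 0 = 1 := by
  simp [monomial]

theorem aUnit_mul_monomial (i : ℤ) (j k : ℕ) :
    aUnit q * monomial q (i, j, k) = monomial q (i + 1, j, k) := by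
  simp only [monomial, add_comm i 1, zpow_one_add, Units.val_mul, mul_assoc]

theorem aUnit_inv_mul_monomial (i : ℤ) (j k : ℕ) :
    ↑(aUnit q)⁻¹ * monomial q (i, j, k) = monomial q (i - 1, j, k) := by
  simp only [monomial, sub_eq_neg_add, zpow_add, zpow_neg_one, Units.val_mul, mul_assoc]

theorem b_mul_monomial (hq : q ≠ 0) (i : ℤ) (j k : ℕ) :
    b q * monomial q (i, j, k) = q⁻¹ ^ i • monomial q (i, j + 1, k) := by
  simp only [monomial, ← mul_assoc,
    mul_zpow_of_mul_eq_smul_mul (inv_ne_zero hq) (b_mul_aUnit hq) i, smul_mul_assoc, pow_succ']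

theorem c_mul_monomial (hq : q ≠ 0) (i : ℤ) (j k : ℕ) :
    c q * monomial q (i, j, k) = q⁻¹ ^ i • monomial q (i, j, k + 1) := by
  simp only [monomial, ← mul_assoc,
    mul_zpow_of_mul_eq_smul_mul (inv_ne_zero hq) (c_mul_aUnit hq) i, smul_mul_assoc]
  rw [mul_assoc _ (c q), ((commute_b_c (q := q)).pow_left j).symm.eq, pow_succ', ← mul_assoc,
    ← mul_assoc]

theorem span_range_monomial_eq_top (hq : q ≠ 0) :
    Submodule.span ℝ (Set.range (monomial q)) = ⊤ := by
  have mem_span (p) : monomial q p ∈ Submodule.span ℝ (Set.range (monomial q)) :=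
    Submodule.subset_span ⟨p, rfl⟩
  refine Submodule.span_eq_top_of_one_mem_of_mul_mem (adjoin_range_generators q)
    (monomial_zero (q := q) ▸ mem_span 0) ?_
  rintro _ ⟨n, rfl⟩ _ ⟨⟨i, j, k⟩, rfl⟩
  fin_cases n
  · exact (aUnit_mul_monomial i j k).symm ▸ mem_span _
  · exact (aUnit_inv_mul_monomial i j k).symm ▸ mem_span _
  · exact (b_mul_monomial hq i j k).symm ▸ Submodule.smul_mem _ _ (mem_span _)
  · exact (c_mul_monomial hq i j k).symm ▸ Submodule.smul_mem _ _ (mem_span _)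

variable (q) in
noncomputable def monomialAction : Fin 4 → Module.End ℝ (ℤ × ℕ × ℕ →₀ ℝ) :=
  ![weightedShift (fun p => (p.1 + 1, p.2)) 1,
    weightedShift (fun p => (p.1 - 1, p.2)) 1,
    weightedShift (fun p => (p.1, p.2.1 + 1, p.2.2)) fun p => q⁻¹ ^ p.1,
    weightedShift (fun p => (p.1, p.2.1, p.2.2 + 1)) fun p => q⁻¹ ^ p.1]

theorem lift_monomialAction_eq_of_rel (hq : q ≠ 0) {x y : FreeAlgebra ℝ (Fin 4)}
    (h : AqRel q x y) : lift ℝ (monomialAction q) x = lift ℝ (monomialAction q) y := by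
  cases h <;>
    simp only [map_mul, map_smul, map_one, lift_ι_apply, monomialAction, Matrix.cons_val,
      weightedShift_mul, smul_weightedShift, ← weightedShift_id_one]
  all_goals congr 1 <;> funext p <;> simp [zpow_add_one₀, hq, mul_left_comm q]

noncomputable def monomialRep (hq : q ≠ 0) : Aq q →ₐ[ℝ] Module.End ℝ (ℤ × ℕ × ℕ →₀ ℝ) :=
  RingQuot.liftAlgHom ℝ ⟨lift ℝ (monomialAction q), fun _ _ => lift_monomialAction_eq_of_rel hq⟩

theorem monomialRep_mkAlgHom_ι (hq : q ≠ 0) (n : Fin 4) :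
    monomialRep hq (RingQuot.mkAlgHom ℝ (AqRel q) (ι ℝ n)) = monomialAction q n := by
  rw [monomialRep, RingQuot.liftAlgHom_mkAlgHom_apply, lift_ι_apply]

theorem monomialRep_aUnit_zpow (hq : q ≠ 0) (i : ℤ) :
    monomialRep hq ↑(aUnit q ^ i) = weightedShift (fun p => (p.1 + i, p.2)) 1 := by
  induction i using Int.induction_on with
  | zero =>
    rw [zpow_zero, Units.val_one, map_one, ← weightedShift_id_one]
    congr 1; funext p; simp
  | succ i ih =>
    rw [zpow_add_one, Units.val_mul, map_mul, ih, coe_aUnit, monomialRep_mkAlgHom_ι]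
    simp only [monomialAction, Matrix.cons_val, weightedShift_mul]
    congr 1
    · funext p; simp only [Function.comp_apply, Prod.mk.injEq, and_true]; ring
    · funext p; simp
  | pred i ih =>
    rw [zpow_sub_one, Units.val_mul, map_mul, ih, coe_aUnit_inv, monomialRep_mkAlgHom_ι]
    simp only [monomialAction, Matrix.cons_val, weightedShift_mul]
    congr 1
    · funext p; simp only [Function.comp_apply, Prod.mk.injEq, and_true]; ring
    · funext p; simp

theorem monomialRep_b_pow_single (hq : q ≠ 0) (n j k : ℕ) :
    monomialRep hq (b q ^ n) (single (0, j, k) 1) = single (0, j + n, k) 1 := by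
  induction n generalizing j with
  | zero => simp
  | succ n ih =>
    rw [pow_succ, map_mul, Module.End.mul_apply, monomialRep_mkAlgHom_ι]
    simp only [monomialAction, Matrix.cons_val, weightedShift_single, zpow_zero, one_mul]
    rw [ih, add_right_comm, add_assoc]

theorem monomialRep_c_pow_single (hq : q ≠ 0) (n j k : ℕ) :
    monomialRep hq (c q ^ n) (single (0, j, k) 1) = single (0, j, k + n) 1 := by
  induction n generalizing k with
  | zero => simp
  | succ n ih =>
    rw [pow_succ, map_mul, Module.End.mul_apply, monomialRep_mkAlgHom_ι]
    simp only [monomialAction, Matrix.cons_val, weightedShift_single, zpow_zero, one_mul]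
    rw [ih, add_right_comm, add_assoc]

theorem monomialRep_monomial_single_zero (hq : q ≠ 0) (p : ℤ × ℕ × ℕ) :
    monomialRep hq (monomial q p) (single 0 1) = single p 1 := by
  obtain ⟨i, j, k⟩ := p
  rw [monomial, map_mul, map_mul, Module.End.mul_apply, Module.End.mul_apply,
    show (0 : ℤ × ℕ × ℕ) = (0, 0, 0) from rfl, monomialRep_c_pow_single,
    monomialRep_b_pow_single, monomialRep_aUnit_zpow]
  simp

theorem linearCombination_monomial_injective (hq : q ≠ 0) :
    Function.Injective (linearCombination ℝ (monomial q)) := by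
  let actOnOrigin : Aq q →ₗ[ℝ] (ℤ × ℕ × ℕ →₀ ℝ) :=
    LinearMap.applyₗ (single 0 1) ∘ₗ (monomialRep hq).toLinearMap
  have hleft : actOnOrigin ∘ₗ linearCombination ℝ (monomial q) = LinearMap.id :=
    lhom_ext fun p r => by simp [actOnOrigin, monomialRep_monomial_single_zero, smul_single]
  exact LinearMap.injective_of_comp_eq_id _ _ hleft

theorem linearCombination_monomial_surjective (hq : q ≠ 0) :
    Function.Surjective (linearCombination ℝ (monomial q)) :=
  (span_range_eq_top_iff_surjective_finsuppLinearCombination ℝ).mp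
    (span_range_monomial_eq_top hq)

end Aq

/-- For `q ≠ 0`, the family `{ a^i b^j c^k : i ∈ ℤ, j, k ∈ ℕ }` is a basis
of `A_q` over `ℝ`: the linear map from the free `ℝ`-module on `ℤ × ℕ × ℕ` sending the basis
vector at `(i, j, k)` to `a^i · b^j · c^k` is bijective. -/
theorem Aq_pbw_basis (q : ℝ) (hq : q ≠ 0) :
    Function.Bijective
      (Finsupp.linearCombination ℝ (fun p : ℤ × ℕ × ℕ =>
        ((aUnit q ^ p.1 : (Aq q)ˣ) : Aq q) *
          (RingQuot.mkAlgHom ℝ (AqRel q) (ι ℝ 2)) ^ p.2.1 *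
          (RingQuot.mkAlgHom ℝ (AqRel q) (ι ℝ 3)) ^ p.2.2)) :=
  ⟨Aq.linearCombination_monomial_injective hq, Aq.linearCombination_monomial_surjective hq⟩
end

section
/- Let q ∈ ℝ with q ≠ 0, and let R_q be the universal unital ℝ-algebra with generators x, y and the single relation x·y = q • (y·x) (the coordinate algebra of the quantum plane, i.e., the quotient of the free ℝ-algebra on two generators by the two-sided ideal generated by this relation). Put u := x·y. Then the family consisting of the elements x^i · u^j (i ≥ 1, j ≥ 0), y^i · u^j (i ≥ 1, j ≥ 0), and u^j (j ≥ 0) is a basis of R_q as an ℝ-vector space. -/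
open FreeAlgebra

/-- The defining relation of the coordinate algebra of the quantum plane:
`x·y = q • (y·x)`, with `x = X 0`, `y = X 1`. -/
inductive QPlaneRel (q : ℝ) : FreeAlgebra ℝ (Fin 2) → FreeAlgebra ℝ (Fin 2) → Prop
  | xy : QPlaneRel q (ι ℝ 0 * ι ℝ 1) (q • (ι ℝ 1 * ι ℝ 0))

/-- The coordinate algebra `R_q` of the quantum plane. -/
noncomputable abbrev QPlane (q : ℝ) : Type := RingQuot (QPlaneRel q)

/-- The generator `x` of `R_q`. -/
noncomputable def qpX (q : ℝ) : QPlane q := RingQuot.mkAlgHom ℝ (QPlaneRel q) (ι ℝ 0)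

/-- The generator `y` of `R_q`. -/
noncomputable def qpY (q : ℝ) : QPlane q := RingQuot.mkAlgHom ℝ (QPlaneRel q) (ι ℝ 1)

/-- The element `u := x·y` of `R_q`. -/
noncomputable def qpU (q : ℝ) : QPlane q := qpX q * qpY q

/-- The family of elements `x^i u^j` (`i ≥ 1`), `y^i u^j` (`i ≥ 1`), `u^j` of `R_q`. -/
noncomputable def qpFamily (q : ℝ) :
    ({i : ℕ // 1 ≤ i} × ℕ) ⊕ ({i : ℕ // 1 ≤ i} × ℕ) ⊕ ℕ → QPlane q :=
  Sum.elim (fun p => qpX q ^ (p.1 : ℕ) * qpU q ^ p.2)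
    (Sum.elim (fun p => qpY q ^ (p.1 : ℕ) * qpU q ^ p.2) (fun j => qpU q ^ j))

/-!
Spanning: in `R_q` one has `u y = q y u` and `u x = q⁻¹ x u`, hence
`x · y^(k+1) u^j = q^k y^k u^(j+1)` and `y · x^(k+1) u^j = q^(-k-1) x^k u^(j+1)`, so the span of
the family contains `1` and is stable under left multiplication by the generators `x, y`.

Independence: `R_q` acts on `ℝ[a, b]` by `x ↦ a · σ` with `σ(a) = a`, `σ(b) = q b`, and
`y ↦ b ·`. Applied to `1`, the family goes to nonzero multiples of the pairwise distinct monomials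
`a^(i+j) b^j`, `a^j b^(i+j)`, `a^j b^j`.
-/

section
variable {R A : Type*} [CommSemiring R] [Semiring A] [Algebra R A]

theorem mul_pow_of_mul_eq_smul_mul_s7 {a b : A} {c : R} (h : a * b = c • (b * a)) (n : ℕ) :
    a * b ^ n = c ^ n • (b ^ n * a) := by
  have hsemi : SemiconjBy a b (c • b) := by rw [SemiconjBy, h, smul_mul_assoc]
  rw [(hsemi.pow_right n).eq, smul_pow, smul_mul_assoc]

theorem Submodule.eq_top_of_mul_mem {s : Set A} (hs : Algebra.adjoin R s = ⊤) {M : Submodule R A}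
    (one_mem : (1 : A) ∈ M) (mul_mem : ∀ a ∈ s, ∀ m ∈ M, a * m ∈ M) : M = ⊤ := by
  have key : ∀ a ∈ Algebra.adjoin R s, ∀ m ∈ M, a * m ∈ M := by
    intro a ha
    induction ha using Algebra.adjoin_induction with
    | mem a ha => exact mul_mem a ha
    | algebraMap r => intro m hm; rw [← Algebra.smul_def]; exact M.smul_mem r hm
    | add a b _ _ ha hb => intro m hm; rw [add_mul]; exact M.add_mem (ha m hm) (hb m hm)
    | mul a b _ _ ha hb => intro m hm; rw [mul_assoc]; exact ha _ (hb m hm)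
  refine eq_top_iff.2 fun a _ => ?_
  simpa using key a (hs ▸ Algebra.mem_top) 1 one_mem

end

section Relations
variable {q : ℝ}

theorem qpX_mul_qpY : qpX q * qpY q = q • (qpY q * qpX q) := by
  simpa [qpX, qpY] using RingQuot.mkAlgHom_rel ℝ (QPlaneRel.xy (q := q))

theorem qpY_mul_qpX (hq : q ≠ 0) : qpY q * qpX q = q⁻¹ • qpU q := by
  rw [qpU, qpX_mul_qpY, smul_smul, inv_mul_cancel₀ hq, one_smul]

theorem qpU_mul_qpY : qpU q * qpY q = q • (qpY q * qpU q) := by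
  conv_lhs => rw [qpU, qpX_mul_qpY, smul_mul_assoc, mul_assoc]
  rfl

theorem qpU_mul_qpX (hq : q ≠ 0) : qpU q * qpX q = q⁻¹ • (qpX q * qpU q) := by
  conv_lhs => rw [qpU, mul_assoc, qpY_mul_qpX hq, mul_smul_comm]

theorem adjoin_qpX_qpY : Algebra.adjoin ℝ {qpX q, qpY q} = ⊤ := by
  have hgen : {qpX q, qpY q} = RingQuot.mkAlgHom ℝ (QPlaneRel q) '' Set.range (ι ℝ) := by
    rw [← Set.range_comp]
    ext
    simp [Fin.exists_fin_two, qpX, qpY, eq_comm]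
  rw [hgen, ← AlgHom.map_adjoin, adjoin_range_ι, Algebra.map_top, AlgHom.range_eq_top]
  exact RingQuot.mkAlgHom_surjective ℝ _

end Relations

section Span
variable {q : ℝ}

theorem qpX_pow_mul_qpU_pow_mem_span (i j : ℕ) :
    qpX q ^ i * qpU q ^ j ∈ Submodule.span ℝ (Set.range (qpFamily q)) := by
  apply Submodule.subset_span
  rcases Nat.eq_zero_or_pos i with rfl | hi
  · exact ⟨.inr (.inr j), by simp [qpFamily]⟩
  · exact ⟨.inl (⟨i, hi⟩, j), rfl⟩

theorem qpY_pow_mul_qpU_pow_mem_span (i j : ℕ) :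
    qpY q ^ i * qpU q ^ j ∈ Submodule.span ℝ (Set.range (qpFamily q)) := by
  apply Submodule.subset_span
  rcases Nat.eq_zero_or_pos i with rfl | hi
  · exact ⟨.inr (.inr j), by simp [qpFamily]⟩
  · exact ⟨.inr (.inl (⟨i, hi⟩, j)), rfl⟩

theorem qpX_mul_qpY_pow_succ_mul_qpU_pow (k j : ℕ) :
    qpX q * (qpY q ^ (k + 1) * qpU q ^ j) = q ^ k • (qpY q ^ k * qpU q ^ (j + 1)) := by
  rw [pow_succ', mul_assoc, ← mul_assoc, ← qpU, ← mul_assoc,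
    mul_pow_of_mul_eq_smul_mul_s7 qpU_mul_qpY, smul_mul_assoc, mul_assoc, ← pow_succ']

theorem qpY_mul_qpX_pow_succ_mul_qpU_pow (hq : q ≠ 0) (k j : ℕ) :
    qpY q * (qpX q ^ (k + 1) * qpU q ^ j) = q⁻¹ ^ (k + 1) • (qpX q ^ k * qpU q ^ (j + 1)) := by
  rw [pow_succ', mul_assoc, ← mul_assoc, qpY_mul_qpX hq, smul_mul_assoc, ← mul_assoc,
    mul_pow_of_mul_eq_smul_mul_s7 (qpU_mul_qpX hq), smul_mul_assoc, smul_smul, mul_assoc,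
    ← pow_succ' (qpU q), ← pow_succ']

theorem qpX_mul_mem_span {m : QPlane q} (hm : m ∈ Submodule.span ℝ (Set.range (qpFamily q))) :
    qpX q * m ∈ Submodule.span ℝ (Set.range (qpFamily q)) := by
  refine (Submodule.span_le (p := (Submodule.span ℝ _).comap (LinearMap.mulLeft ℝ (qpX q)))).2
    ?_ hm
  rintro _ ⟨⟨⟨i, -⟩, j⟩ | ⟨⟨_ | k, hk⟩, j⟩ | j, rfl⟩
  · simpa [qpFamily, ← mul_assoc, ← pow_succ'] using qpX_pow_mul_qpU_pow_mem_span (i + 1) j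
  · cases hk
  · simpa [qpFamily, qpX_mul_qpY_pow_succ_mul_qpU_pow] using
      Submodule.smul_mem _ (q ^ k) (qpY_pow_mul_qpU_pow_mem_span k (j + 1))
  · simpa [qpFamily] using qpX_pow_mul_qpU_pow_mem_span 1 j

theorem qpY_mul_mem_span (hq : q ≠ 0) {m : QPlane q}
    (hm : m ∈ Submodule.span ℝ (Set.range (qpFamily q))) :
    qpY q * m ∈ Submodule.span ℝ (Set.range (qpFamily q)) := by
  refine (Submodule.span_le (p := (Submodule.span ℝ _).comap (LinearMap.mulLeft ℝ (qpY q)))).2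
    ?_ hm
  rintro _ ⟨⟨⟨_ | k, hk⟩, j⟩ | ⟨⟨i, -⟩, j⟩ | j, rfl⟩
  · cases hk
  · simpa [qpFamily, qpY_mul_qpX_pow_succ_mul_qpU_pow hq] using
      Submodule.smul_mem _ (q⁻¹ ^ (k + 1)) (qpX_pow_mul_qpU_pow_mem_span k (j + 1))
  · simpa [qpFamily, ← mul_assoc, ← pow_succ'] using qpY_pow_mul_qpU_pow_mem_span (i + 1) j
  · simpa [qpFamily] using qpY_pow_mul_qpU_pow_mem_span 1 j

theorem span_qpFamily_eq_top (hq : q ≠ 0) : Submodule.span ℝ (Set.range (qpFamily q)) = ⊤ := by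
  refine Submodule.eq_top_of_mul_mem adjoin_qpX_qpY ?_ ?_
  · simpa using qpX_pow_mul_qpU_pow_mem_span (q := q) 0 0
  · rintro a (rfl | rfl) m hm
    exacts [qpX_mul_mem_span hm, qpY_mul_mem_span hq hm]

end Span

section Representation
open MvPolynomial
variable {R : Type*} [CommSemiring R]

theorem linearIndependent_X_zero_pow_mul_X_one_pow :
    LinearIndependent R (fun e : ℕ × ℕ => (X 0 ^ e.1 * X 1 ^ e.2 : MvPolynomial (Fin 2) R)) := by
  have hinj :
      Function.Injective fun e : ℕ × ℕ => Finsupp.single (0 : Fin 2) e.1 + .single 1 e.2 := by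
    intro e e' h
    have h0 := DFunLike.congr_fun h 0
    have h1 := DFunLike.congr_fun h 1
    simp only [Finsupp.add_apply, Finsupp.single_apply] at h0 h1
    exact Prod.ext (by simpa using h0) (by simpa using h1)
  convert (basisMonomials (Fin 2) R).linearIndependent.comp _ hinj with e
  simp [X_pow_eq_monomial, monomial_mul]

variable (q : R)

noncomputable def qpXOp : Module.End R (MvPolynomial (Fin 2) R) :=
  LinearMap.mulLeft R (X 0) ∘ₗ (aeval ![X 0, q • X 1]).toLinearMap

noncomputable def qpYOp : Module.End R (MvPolynomial (Fin 2) R) := LinearMap.mulLeft R (X 1)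

theorem qpXOp_apply (p : MvPolynomial (Fin 2) R) :
    qpXOp q p = X 0 * aeval ![X 0, q • X 1] p := rfl

theorem qpXOp_mul_qpYOp : qpXOp q * qpYOp = q • (qpYOp * qpXOp q) := by
  refine LinearMap.ext fun p => ?_
  simp only [Module.End.mul_apply, LinearMap.smul_apply, qpXOp_apply, qpYOp,
    LinearMap.mulLeft_apply, map_mul, aeval_X, Matrix.cons_val_one, Matrix.cons_val_fin_one,
    smul_mul_assoc, mul_smul_comm]
  rw [mul_left_comm]

theorem qpXOp_apply_X_pow_mul_X_pow (a b : ℕ) :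
    qpXOp q (X 0 ^ a * X 1 ^ b) = q ^ b • (X 0 ^ (a + 1) * X 1 ^ b) := by
  simp only [qpXOp_apply, map_mul, map_pow, aeval_X, Matrix.cons_val_zero, Matrix.cons_val_one,
    Matrix.cons_val_fin_one, smul_pow, mul_smul_comm]
  rw [← mul_assoc, ← pow_succ']

theorem qpXOp_pow_apply_X_pow_mul_X_pow (i a b : ℕ) :
    (qpXOp q ^ i) (X 0 ^ a * X 1 ^ b) = q ^ (i * b) • (X 0 ^ (a + i) * X 1 ^ b) := by
  induction i with
  | zero => simp
  | succ i ih =>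
    rw [pow_succ', Module.End.mul_apply, ih, map_smul, qpXOp_apply_X_pow_mul_X_pow, smul_smul,
      ← pow_add, add_one_mul, add_assoc]

theorem qpYOp_pow_apply_X_pow_mul_X_pow (i a b : ℕ) :
    (qpYOp ^ i) (X 0 ^ a * X 1 ^ b : MvPolynomial (Fin 2) R) = X 0 ^ a * X 1 ^ (b + i) := by
  rw [qpYOp, LinearMap.pow_mulLeft, LinearMap.mulLeft_apply]
  ring

theorem qpXOp_mul_qpYOp_pow_apply_one (j : ℕ) : ∃ n : ℕ,
    ((qpXOp q * qpYOp) ^ j : Module.End R (MvPolynomial (Fin 2) R)) 1 =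
      q ^ n • (X 0 ^ j * X 1 ^ j) := by
  induction j with
  | zero => exact ⟨0, by simp⟩
  | succ j ih =>
    obtain ⟨n, hn⟩ := ih
    refine ⟨n + (j + 1), ?_⟩
    have hY := qpYOp_pow_apply_X_pow_mul_X_pow (R := R) 1 j j
    rw [pow_one] at hY
    rw [pow_succ', Module.End.mul_apply, hn, map_smul, Module.End.mul_apply, hY,
      qpXOp_apply_X_pow_mul_X_pow, smul_smul, ← pow_add]

end Representation

section Independence
open MvPolynomial
variable {q : ℝ}

variable (q) in
noncomputable def qpRep : QPlane q →ₐ[ℝ] Module.End ℝ (MvPolynomial (Fin 2) ℝ) :=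
  RingQuot.liftAlgHom ℝ ⟨FreeAlgebra.lift ℝ ![qpXOp q, qpYOp], by
    rintro _ _ ⟨⟩
    simpa using qpXOp_mul_qpYOp q⟩

theorem qpRep_qpX : qpRep q (qpX q) = qpXOp q := by
  simp [qpRep, qpX]

theorem qpRep_qpY : qpRep q (qpY q) = qpYOp := by
  simp [qpRep, qpY]

def qpExponent : ({i : ℕ // 1 ≤ i} × ℕ) ⊕ ({i : ℕ // 1 ≤ i} × ℕ) ⊕ ℕ → ℕ × ℕ :=
  Sum.elim (fun p => (p.2 + p.1, p.2)) (Sum.elim (fun p => (p.2, p.2 + p.1)) fun j => (j, j))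

theorem qpExponent_injective : Function.Injective qpExponent := by
  rintro (⟨⟨i, hi⟩, j⟩ | ⟨⟨i, hi⟩, j⟩ | j) (⟨⟨i', hi'⟩, j'⟩ | ⟨⟨i', hi'⟩, j'⟩ | j') h <;>
    simp only [qpExponent, Sum.elim_inl, Sum.elim_inr, Prod.mk.injEq] at h <;>
    simp only [Sum.inl.injEq, Sum.inr.injEq, Prod.mk.injEq, Subtype.mk.injEq, reduceCtorEq] <;>
    omega

theorem qpRep_qpFamily_apply_one (idx) : ∃ n : ℕ,
    qpRep q (qpFamily q idx) 1 = q ^ n • (X 0 ^ (qpExponent idx).1 * X 1 ^ (qpExponent idx).2) := by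
  have hU : qpRep q (qpU q) = qpXOp q * qpYOp := by rw [qpU, map_mul, qpRep_qpX, qpRep_qpY]
  rcases idx with ⟨⟨i, -⟩, j⟩ | ⟨⟨i, -⟩, j⟩ | j <;>
    obtain ⟨n, hn⟩ := qpXOp_mul_qpYOp_pow_apply_one q j <;>
    simp only [qpFamily, qpExponent, Sum.elim_inl, Sum.elim_inr, map_mul, map_pow, qpRep_qpX,
      qpRep_qpY, hU, Module.End.mul_apply, hn, map_smul]
  · rw [qpXOp_pow_apply_X_pow_mul_X_pow, smul_smul, ← pow_add]
    exact ⟨_, rfl⟩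
  · rw [qpYOp_pow_apply_X_pow_mul_X_pow]
    exact ⟨n, rfl⟩
  · exact ⟨n, rfl⟩

theorem linearIndependent_qpFamily (hq : q ≠ 0) : LinearIndependent ℝ (qpFamily q) := by
  choose n hn using qpRep_qpFamily_apply_one (q := q)
  have himage :=
    (linearIndependent_X_zero_pow_mul_X_one_pow.comp _ qpExponent_injective).units_smul
      fun idx => (pow_ne_zero (n idx) hq).isUnit.unit
  have hrep : LinearIndependent ℝ fun idx => qpRep q (qpFamily q idx) 1 := by
    simp_rw [hn]
    exact himage
  exact .of_comp (LinearMap.applyₗ 1 ∘ₗ (qpRep q).toLinearMap) hrep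

end Independence

/-- For `q ≠ 0`, the family consisting of `x^i u^j` (`i ≥ 1, j ≥ 0`),
`y^i u^j` (`i ≥ 1, j ≥ 0`) and `u^j` (`j ≥ 0`) is a basis of `R_q` as an `ℝ`-vector space:
it is linearly independent and spans `R_q`. -/
theorem qplane_basis (q : ℝ) (hq : q ≠ 0) :
    LinearIndependent ℝ (qpFamily q) ∧
      Submodule.span ℝ (Set.range (qpFamily q)) = ⊤ :=
  ⟨linearIndependent_qpFamily hq, span_qpFamily_eq_top hq⟩
end

section
/- Every finite-dimensional real Lie algebra L has a maximal triangular quotient: there exists a Lie ideal h of L such that L/h is triangular and h ≤ h' for every Lie ideal h' of L with L/h' triangular. -/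
/-- A finite-dimensional real Lie algebra is *triangular* if it is solvable and for every
`x` the characteristic polynomial of `ad x` splits over `ℝ` (all eigenvalues of `ad x` are
real). -/
def LieAlgebra.IsTriangular (L : Type*) [LieRing L] [LieAlgebra ℝ L]
    [Module.Finite ℝ L] : Prop :=
  LieAlgebra.IsSolvable L ∧
    ∀ x : L, ((LieAlgebra.ad ℝ L x).charpoly).Splits

open Polynomial

section CharpolyAux

variable {K V W : Type*} [Field K] [AddCommGroup V] [Module K V] [FiniteDimensional K V]
  [AddCommGroup W] [Module K W] [FiniteDimensional K W]

/-- The characteristic polynomial of the restriction of an endomorphism to an invariant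
subspace divides the characteristic polynomial. -/
lemma charpoly_restrict_dvd_aux (f : Module.End K V) (p : Submodule K V)
    (h : ∀ x ∈ p, f x ∈ p) : (f.restrict h).charpoly ∣ f.charpoly := by
  classical
  obtain ⟨q, hq⟩ := Submodule.exists_isCompl p
  let e := Submodule.prodEquivOfIsCompl p q hq
  let φ := e.symm.conj f
  have hc : φ.charpoly = f.charpoly := e.symm.charpoly_conj f
  rw [← hc]
  let bp := Module.Free.chooseBasis K p
  let bq := Module.Free.chooseBasis K q
  let b := bp.prod bq
  rw [← LinearMap.charpoly_toMatrix φ b, ← LinearMap.charpoly_toMatrix (f.restrict h) bp]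
  set M := LinearMap.toMatrix b b φ with hM
  have key : ∀ j, φ (b (Sum.inl j)) = (((f.restrict h) (bp j) : p), (0 : q)) := by
    intro j
    have hb : b (Sum.inl j) = (bp j, 0) :=
      Prod.ext (bp.prod_apply_inl_fst bq j) (bp.prod_apply_inl_snd bq j)
    have he : e ((bp j, (0 : q)) : p × q) = ((bp j : V)) := by
      rw [Submodule.coe_prodEquivOfIsCompl']; simp
    have hf : f ((bp j : V)) ∈ p := h _ (bp j).2
    have : φ (b (Sum.inl j)) = e.symm (f (e (bp j, (0 : q)))) := by
      rw [hb]
      simp [φ, LinearEquiv.conj_apply]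
    rw [this, he]
    exact Submodule.prodEquivOfIsCompl_symm_apply_left p q hq (⟨f ((bp j : V)), hf⟩ : p)
  have hM' : M = Matrix.fromBlocks (LinearMap.toMatrix bp bp (f.restrict h))
      M.toBlocks₁₂ 0 M.toBlocks₂₂ := by
    ext i j
    cases i with
    | inl i =>
      cases j with
      | inl j =>
        simp only [Matrix.fromBlocks_apply₁₁, hM, LinearMap.toMatrix_apply, key j]
        rw [Module.Basis.prod_repr_inl]
      | inr j => simp [Matrix.toBlocks₁₂]
    | inr i =>
      cases j with
      | inl j =>
        simp only [Matrix.fromBlocks_apply₂₁, hM, LinearMap.toMatrix_apply, key j,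
          Matrix.zero_apply]
        rw [Module.Basis.prod_repr_inr]
        simp
      | inr j => simp [Matrix.toBlocks₂₂]
  rw [hM', Matrix.charpoly_fromBlocks_zero₂₁]
  exact Dvd.intro _ rfl

/-- If an injective linear map intertwines `f` and `g`, then `charpoly f ∣ charpoly g`. -/
lemma charpoly_dvd_of_injective (π : V →ₗ[K] W) (hinj : Function.Injective π)
    (f : Module.End K V) (g : Module.End K W) (hcomm : ∀ v, π (f v) = g (π v)) :
    f.charpoly ∣ g.charpoly := by
  let p := LinearMap.range π
  have hp : ∀ x ∈ p, g x ∈ p := by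
    rintro _ ⟨v, rfl⟩
    exact ⟨f v, (hcomm v).symm ▸ rfl⟩
  have hconj : g.restrict hp = (LinearEquiv.ofInjective π hinj).conj f := by
    apply LinearMap.ext
    rintro ⟨_, v, rfl⟩
    set e := LinearEquiv.ofInjective π hinj
    have hv : (⟨π v, ⟨v, rfl⟩⟩ : p) = e v := by
      apply Subtype.ext
      simp [e]
    rw [hv]
    apply Subtype.ext
    have h1 : ((g.restrict hp) (e v) : W) = g ((e v : W)) := LinearMap.restrict_coe_apply _ _ _
    have h2 : ((e v : W)) = π v := by simp [e]
    have h3 : (e.conj f) (e v) = e (f v) := by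
      rw [LinearEquiv.conj_apply]
      simp
    rw [h1, h2, h3, ← hcomm v]
    simp [e]
  have : (g.restrict hp).charpoly = f.charpoly := by
    rw [hconj, LinearEquiv.charpoly_conj]
  rw [← this]
  exact charpoly_restrict_dvd_aux g p hp

end CharpolyAux

section LieAux

variable {L : Type*} [LieRing L] [LieAlgebra ℝ L] [Module.Finite ℝ L]

/-- The quotient map `L → L ⧸ I` as a morphism of Lie algebras. -/
def lieQuotMk (I : LieIdeal ℝ L) : L →ₗ⁅ℝ⁆ L ⧸ I :=
  { I.toSubmodule.mkQ with map_lie' := fun {_ _} => rfl }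

lemma lieQuotMk_surjective (I : LieIdeal ℝ L) : Function.Surjective (lieQuotMk I) :=
  Submodule.Quotient.mk_surjective _

lemma lieQuotMk_ker (I : LieIdeal ℝ L) : (lieQuotMk I).ker = I := by
  ext x
  simp only [LieHom.mem_ker]
  exact Submodule.Quotient.mk_eq_zero _

lemma solvable_quot_iff (I : LieIdeal ℝ L) :
    LieAlgebra.IsSolvable (L ⧸ I) ↔ ∃ k, LieAlgebra.derivedSeries ℝ L k ≤ I := by
  rw [LieAlgebra.isSolvable_iff ℝ]
  constructor
  · rintro ⟨k, hk⟩
    refine ⟨k, ?_⟩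
    rw [← LieIdeal.derivedSeries_map_eq k (lieQuotMk_surjective I)] at hk
    rw [LieIdeal.map_eq_bot_iff, lieQuotMk_ker] at hk
    exact hk
  · rintro ⟨k, hk⟩
    refine ⟨k, ?_⟩
    rw [← LieIdeal.derivedSeries_map_eq k (lieQuotMk_surjective I),
      LieIdeal.map_eq_bot_iff, lieQuotMk_ker]
    exact hk

/-- If `L/I` and `L/J` are triangular, so is `L/(I ⊓ J)`. -/
lemma isTriangular_quot_inf (I J : LieIdeal ℝ L)
    (hI : LieAlgebra.IsTriangular (L ⧸ I)) (hJ : LieAlgebra.IsTriangular (L ⧸ J)) :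
    LieAlgebra.IsTriangular (L ⧸ (I ⊓ J)) := by
  obtain ⟨hIs, hIc⟩ := hI
  obtain ⟨hJs, hJc⟩ := hJ
  constructor
  · rw [solvable_quot_iff] at hIs hJs ⊢
    obtain ⟨k, hk⟩ := hIs
    obtain ⟨l, hl⟩ := hJs
    refine ⟨max k l, le_inf ?_ ?_⟩
    · exact le_trans (LieAlgebra.derivedSeriesOfIdeal_antitone ⊤ (le_max_left k l)) hk
    · exact le_trans (LieAlgebra.derivedSeriesOfIdeal_antitone ⊤ (le_max_right k l)) hl
  · intro z
    obtain ⟨x, rfl⟩ := lieQuotMk_surjective (I ⊓ J) z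
    -- the two projection maps
    have hKI : (I ⊓ J : LieIdeal ℝ L).toSubmodule ≤
        I.toSubmodule.comap (LinearMap.id (R := ℝ) (M := L)) := fun y hy => hy.1
    have hKJ : (I ⊓ J : LieIdeal ℝ L).toSubmodule ≤
        J.toSubmodule.comap (LinearMap.id (R := ℝ) (M := L)) := fun y hy => hy.2
    let π₁ : (L ⧸ (I ⊓ J)) →ₗ[ℝ] (L ⧸ I) :=
      Submodule.mapQ _ _ LinearMap.id hKI
    let π₂ : (L ⧸ (I ⊓ J)) →ₗ[ℝ] (L ⧸ J) :=
      Submodule.mapQ _ _ LinearMap.id hKJ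
    have hπ₁ : ∀ y : L, π₁ (lieQuotMk (I ⊓ J) y) = lieQuotMk I y := fun y => rfl
    have hπ₂ : ∀ y : L, π₂ (lieQuotMk (I ⊓ J) y) = lieQuotMk J y := fun y => rfl
    let π : (L ⧸ (I ⊓ J)) →ₗ[ℝ] (L ⧸ I) × (L ⧸ J) := π₁.prod π₂
    have hinj : Function.Injective π := by
      rw [← LinearMap.ker_eq_bot]
      rw [eq_bot_iff]
      intro z hz
      obtain ⟨y, rfl⟩ := lieQuotMk_surjective (I ⊓ J) z
      rw [LinearMap.mem_ker, LinearMap.prod_apply] at hz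
      have h1 : π₁ (lieQuotMk (I ⊓ J) y) = 0 := congrArg Prod.fst hz
      have h2 : π₂ (lieQuotMk (I ⊓ J) y) = 0 := congrArg Prod.snd hz
      rw [hπ₁] at h1
      rw [hπ₂] at h2
      have hyI : y ∈ I := by rwa [← LieHom.mem_ker, lieQuotMk_ker] at h1
      have hyJ : y ∈ J := by rwa [← LieHom.mem_ker, lieQuotMk_ker] at h2
      have : y ∈ I ⊓ J := ⟨hyI, hyJ⟩
      rw [Submodule.mem_bot, ← LieHom.mem_ker, lieQuotMk_ker]
      exact this
    let g : Module.End ℝ ((L ⧸ I) × (L ⧸ J)) :=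
      (LieAlgebra.ad ℝ (L ⧸ I) (lieQuotMk I x)).prodMap (LieAlgebra.ad ℝ (L ⧸ J) (lieQuotMk J x))
    have hcomm : ∀ v, π ((LieAlgebra.ad ℝ (L ⧸ (I ⊓ J)) (lieQuotMk (I ⊓ J) x)) v) = g (π v) := by
      intro v
      obtain ⟨y, rfl⟩ := lieQuotMk_surjective (I ⊓ J) v
      have hbr : (LieAlgebra.ad ℝ (L ⧸ (I ⊓ J)) (lieQuotMk (I ⊓ J) x)) (lieQuotMk (I ⊓ J) y)
          = lieQuotMk (I ⊓ J) ⁅x, y⁆ := by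
        rw [LieAlgebra.ad_apply, ← LieHom.map_lie]
      rw [hbr]
      show (π₁ (lieQuotMk (I ⊓ J) ⁅x, y⁆), π₂ (lieQuotMk (I ⊓ J) ⁅x, y⁆)) = _
      rw [hπ₁, hπ₂]
      show _ = (LieAlgebra.ad ℝ (L ⧸ I) (lieQuotMk I x) (π₁ (lieQuotMk (I ⊓ J) y)),
        LieAlgebra.ad ℝ (L ⧸ J) (lieQuotMk J x) (π₂ (lieQuotMk (I ⊓ J) y)))
      rw [hπ₁, hπ₂]
      simp only [LieAlgebra.ad_apply, ← LieHom.map_lie]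
    have hdvd : (LieAlgebra.ad ℝ (L ⧸ (I ⊓ J)) (lieQuotMk (I ⊓ J) x)).charpoly ∣ g.charpoly :=
      charpoly_dvd_of_injective π hinj _ g hcomm
    have hg : g.charpoly = (LieAlgebra.ad ℝ (L ⧸ I) (lieQuotMk I x)).charpoly *
        (LieAlgebra.ad ℝ (L ⧸ J) (lieQuotMk J x)).charpoly :=
      LinearMap.charpoly_prodMap _ _
    have hsplit : g.charpoly.Splits := by
      rw [hg]
      exact Polynomial.Splits.mul (hIc _) (hJc _)
    exact Polynomial.Splits.of_dvd hsplit ((LinearMap.charpoly_monic g).ne_zero) hdvd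

/-- The zero quotient is triangular. -/
lemma isTriangular_quot_top : LieAlgebra.IsTriangular (L ⧸ (⊤ : LieIdeal ℝ L)) := by
  have hsub : Subsingleton (L ⧸ (⊤ : LieIdeal ℝ L)) := by
    constructor
    intro a b
    obtain ⟨x, rfl⟩ := lieQuotMk_surjective ⊤ a
    obtain ⟨y, rfl⟩ := lieQuotMk_surjective ⊤ b
    have hx : lieQuotMk (⊤ : LieIdeal ℝ L) x = 0 := by
      rw [← LieHom.mem_ker, lieQuotMk_ker]; trivial
    have hy : lieQuotMk (⊤ : LieIdeal ℝ L) y = 0 := by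
      rw [← LieHom.mem_ker, lieQuotMk_ker]; trivial
    rw [hx, hy]
  constructor
  · have : IsLieAbelian (L ⧸ (⊤ : LieIdeal ℝ L)) :=
      ⟨fun x y => @Subsingleton.elim _ hsub _ _⟩
    exact LieAlgebra.ofAbelianIsSolvable _
  · intro x
    apply Polynomial.Splits.of_natDegree_le_one
    rw [LinearMap.charpoly_natDegree]
    have : Module.finrank ℝ (L ⧸ (⊤ : LieIdeal ℝ L)) = 0 := by
      haveI := hsub
      exact Module.finrank_zero_of_subsingleton
    omega

end LieAux

/-- Every finite-dimensional real Lie algebra has a maximal triangular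
quotient: there is a Lie ideal `h` with `L/h` triangular and `h ≤ h'` for every Lie ideal
`h'` with `L/h'` triangular. -/
theorem exists_maximal_triangular_quotient (L : Type*) [LieRing L] [LieAlgebra ℝ L]
    [Module.Finite ℝ L] :
    ∃ h : LieIdeal ℝ L, LieAlgebra.IsTriangular (L ⧸ h) ∧
      ∀ h' : LieIdeal ℝ L, LieAlgebra.IsTriangular (L ⧸ h') → h ≤ h' := by
  set S : Set (LieIdeal ℝ L) := {I | LieAlgebra.IsTriangular (L ⧸ I)} with hS
  have hne : S.Nonempty := ⟨⊤, isTriangular_quot_top⟩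
  obtain ⟨h, hhS, hmin⟩ :=
    (LieSubmodule.wellFoundedLT_of_isArtinian ℝ L L).wf.has_min S hne
  refine ⟨h, hhS, fun h' hh' => ?_⟩
  have hmem : h ⊓ h' ∈ S := isTriangular_quot_inf h h' hhS hh'
  have hle : h ⊓ h' ≤ h := inf_le_left
  have : ¬ h ⊓ h' < h := hmin _ hmem
  have heq : h ⊓ h' = h := by
    by_contra hne
    exact this (hle.lt_of_ne hne)
  calc h = h ⊓ h' := heq.symm
  _ ≤ h' := inf_le_right
end

section
/- Fix m ∈ ℕ and real numbers s₁,…,s_m, t₁,…,t_m, and use the matrix conventions of the context. Then for every β = (β₁, β₂) ∈ ℕ², the matrix M_β := (ad E)^{β₁} ((ad (F − J))^{β₂+1} (E)) is strictly upper triangular with explicitly known first superdiagonal: (M_β)_{ij} = 0 whenever j ≤ i, and (M_β)_{i,i+1} = (−1)^{β₁+1} · s_{i+1}^{β₁+1} · t_{i+1}^{β₂} for every 0 ≤ i < m. In particular M_β agrees with the matrix having entries (−1)^{β₁+1} s_{p}^{β₁+1} t_{p}^{β₂} on the first superdiagonal up to a matrix vanishing on and below the first superdiagonal. -/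
/-!
Call a matrix *strictly upper triangular with superdiagonal `g`* if it vanishes on and below the
diagonal and its `(i, i+1)` entry is `g i`. For a diagonal `D = diag d`, `(ad D) B` has entries
`(d i - d j) B i j`, so `ad E` and `ad F` preserve this shape and multiply `g` by
`-s (p+1)` resp. `t (p+1)`. Since `J` raises the row index by one, `ad J` sends such a matrix to one
vanishing up to and including the first superdiagonal, so `ad (F - J)` acts like `ad F`. The first
step `⁅F - J, E⁆ = ⁅E, J⁆` starts the recursion with superdiagonal `-s (p+1)`.
-/

/-- The diagonal matrix `E` with `E_{ii} = s₁ + ⋯ + s_i` (so `E_{00} = 0`). -/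
noncomputable def Emat (m : ℕ) (s : ℕ → ℝ) : Matrix (Fin (m + 1)) (Fin (m + 1)) ℝ :=
  Matrix.diagonal fun i => ∑ p ∈ Finset.Icc 1 (i : ℕ), s p

/-- The diagonal matrix `F` with `F_{ii} = t_{i+1} + ⋯ + t_m` (so `F_{mm} = 0`). -/
noncomputable def Fmat (m : ℕ) (t : ℕ → ℝ) : Matrix (Fin (m + 1)) (Fin (m + 1)) ℝ :=
  Matrix.diagonal fun i => ∑ p ∈ Finset.Icc ((i : ℕ) + 1) m, t p

/-- The nilpotent Jordan matrix `J` with `J_{i,i+1} = 1` and all other entries `0`. -/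
def Jmat (m : ℕ) : Matrix (Fin (m + 1)) (Fin (m + 1)) ℝ :=
  Matrix.of fun i j => if (j : ℕ) = (i : ℕ) + 1 then 1 else 0

/-- `M_β := (ad E)^{β₁} ((ad (F − J))^{β₂+1} (E))`, where `⁅A, B⁆ = A·B − B·A`. -/
noncomputable def Mmat (m : ℕ) (s t : ℕ → ℝ) (β₁ β₂ : ℕ) :
    Matrix (Fin (m + 1)) (Fin (m + 1)) ℝ :=
  (fun B => ⁅Emat m s, B⁆)^[β₁] ((fun B => ⁅Fmat m t - Jmat m, B⁆)^[β₂ + 1] (Emat m s))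

open Matrix

def StrictUpperWithSuperdiag {R : Type*} [Zero R] {n : ℕ} (B : Matrix (Fin n) (Fin n) R)
    (g : ℕ → R) : Prop :=
  (∀ i j : Fin n, (j : ℕ) ≤ i → B i j = 0) ∧ ∀ i j : Fin n, (j : ℕ) = i + 1 → B i j = g i

namespace StrictUpperWithSuperdiag

variable {R : Type*} {n : ℕ}

theorem sub [AddGroup R] {A B : Matrix (Fin n) (Fin n) R} {f g : ℕ → R}
    (hA : StrictUpperWithSuperdiag A f) (hB : StrictUpperWithSuperdiag B g) :
    StrictUpperWithSuperdiag (A - B) (f - g) :=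
  ⟨fun i j hji => by simp [hA.1 i j hji, hB.1 i j hji],
    fun i j hj => by simp [hA.2 i j hj, hB.2 i j hj]⟩

theorem iterate [MonoidWithZero R] {φ : Matrix (Fin n) (Fin n) R → Matrix (Fin n) (Fin n) R}
    {c : ℕ → R}
    (hφ : ∀ B g, StrictUpperWithSuperdiag B g → StrictUpperWithSuperdiag (φ B) (c * g))
    {B : Matrix (Fin n) (Fin n) R} {g : ℕ → R} (hB : StrictUpperWithSuperdiag B g) (k : ℕ) :
    StrictUpperWithSuperdiag (φ^[k] B) (c ^ k * g) := by
  induction k with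
  | zero => simpa using hB
  | succ k ih => simpa [Function.iterate_succ_apply', pow_succ', mul_assoc] using hφ _ _ ih

theorem lie_diagonal [CommRing R] {B : Matrix (Fin n) (Fin n) R} {g : ℕ → R}
    (hB : StrictUpperWithSuperdiag B g) {d : Fin n → R} {c : ℕ → R}
    (hd : ∀ i j : Fin n, (j : ℕ) = i + 1 → d i - d j = c i) :
    StrictUpperWithSuperdiag ⁅diagonal d, B⁆ (c * g) := by
  have lie_apply (i j : Fin n) : ⁅diagonal d, B⁆ i j = (d i - d j) * B i j := by
    simp only [Ring.lie_def, Matrix.sub_apply, diagonal_mul, mul_diagonal]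
    ring
  exact ⟨fun i j hji => by rw [lie_apply, hB.1 i j hji, mul_zero],
    fun i j hj => by rw [lie_apply, hB.2 i j hj, hd i j hj, Pi.mul_apply]⟩

end StrictUpperWithSuperdiag

section

variable {m : ℕ}

theorem Jmat_strictUpperWithSuperdiag : StrictUpperWithSuperdiag (Jmat m) 1 :=
  ⟨fun i j hji => if_neg (by omega), fun i j hj => if_pos hj⟩

theorem StrictUpperWithSuperdiag.lie_Jmat {B : Matrix (Fin (m + 1)) (Fin (m + 1)) ℝ} {g : ℕ → ℝ}
    (hB : StrictUpperWithSuperdiag B g) : StrictUpperWithSuperdiag ⁅Jmat m, B⁆ 0 := by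
  have vanish (i j : Fin (m + 1)) (hji : (j : ℕ) ≤ i + 1) : ⁅Jmat m, B⁆ i j = 0 := by
    have hJB : (Jmat m * B) i j = 0 := by
      refine (mul_apply ..).trans (Finset.sum_eq_zero fun k _ => ?_)
      by_cases hk : (k : ℕ) = i + 1
      · rw [hB.1 k j (by omega), mul_zero]
      · simp only [Jmat, of_apply, if_neg hk, zero_mul]
    have hBJ : (B * Jmat m) i j = 0 := by
      refine (mul_apply ..).trans (Finset.sum_eq_zero fun k _ => ?_)
      by_cases hk : (j : ℕ) = k + 1
      · rw [hB.1 i k (by omega), zero_mul]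
      · simp only [Jmat, of_apply, if_neg hk, mul_zero]
    rw [Ring.lie_def, Matrix.sub_apply, hJB, hBJ, sub_zero]
  exact ⟨fun i j hji => vanish i j (by omega), fun i j hj => vanish i j hj.le⟩

theorem Emat_diag_sub_succ (s : ℕ → ℝ) (i j : Fin (m + 1)) (hj : (j : ℕ) = i + 1) :
    (∑ p ∈ Finset.Icc 1 (i : ℕ), s p) - ∑ p ∈ Finset.Icc 1 (j : ℕ), s p = -s (i + 1) := by
  rw [hj, Finset.sum_Icc_succ_top (by omega)]
  ring

theorem Fmat_diag_sub_succ (t : ℕ → ℝ) (i j : Fin (m + 1)) (hj : (j : ℕ) = i + 1) :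
    (∑ p ∈ Finset.Icc ((i : ℕ) + 1) m, t p) - ∑ p ∈ Finset.Icc ((j : ℕ) + 1) m, t p =
      t (i + 1) := by
  rw [hj, Finset.Icc_add_one_left_eq_Ioc ((i : ℕ) + 1), ← Finset.sum_Ioc_add_eq_sum_Icc (by omega)]
  ring

theorem StrictUpperWithSuperdiag.lie_Emat {s : ℕ → ℝ} {B : Matrix (Fin (m + 1)) (Fin (m + 1)) ℝ}
    {g : ℕ → ℝ} (hB : StrictUpperWithSuperdiag B g) :
    StrictUpperWithSuperdiag ⁅Emat m s, B⁆ ((fun p => -s (p + 1)) * g) :=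
  hB.lie_diagonal (Emat_diag_sub_succ s)

theorem StrictUpperWithSuperdiag.lie_Fmat_sub_Jmat {t : ℕ → ℝ}
    {B : Matrix (Fin (m + 1)) (Fin (m + 1)) ℝ} {g : ℕ → ℝ} (hB : StrictUpperWithSuperdiag B g) :
    StrictUpperWithSuperdiag ⁅Fmat m t - Jmat m, B⁆ ((fun p => t (p + 1)) * g) := by
  have hF : StrictUpperWithSuperdiag ⁅Fmat m t, B⁆ ((fun p => t (p + 1)) * g) :=
    hB.lie_diagonal (Fmat_diag_sub_succ t)
  have hsub : ⁅Fmat m t - Jmat m, B⁆ = ⁅Fmat m t, B⁆ - ⁅Jmat m, B⁆ := by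
    simp only [Ring.lie_def]
    noncomm_ring
  simpa [hsub] using hF.sub hB.lie_Jmat

theorem lie_Fmat_sub_Jmat_Emat (s t : ℕ → ℝ) :
    StrictUpperWithSuperdiag ⁅Fmat m t - Jmat m, Emat m s⁆ fun p => -s (p + 1) := by
  have hFE : Fmat m t * Emat m s = Emat m s * Fmat m t := commute_diagonal _ _
  have hlie : ⁅Fmat m t - Jmat m, Emat m s⁆ = ⁅Emat m s, Jmat m⁆ := by
    simp only [Ring.lie_def, sub_mul, mul_sub, hFE]
    abel
  rw [hlie]
  simpa using Jmat_strictUpperWithSuperdiag.lie_Emat (m := m) (s := s)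

end

/-- `M_β` vanishes on and below the main diagonal, and its first
superdiagonal entries are `(M_β)_{i,i+1} = (−1)^{β₁+1} · s_{i+1}^{β₁+1} · t_{i+1}^{β₂}`. -/
theorem Mmat_entries (m : ℕ) (s t : ℕ → ℝ) (β₁ β₂ : ℕ) :
    (∀ i j : Fin (m + 1), (j : ℕ) ≤ (i : ℕ) → Mmat m s t β₁ β₂ i j = 0) ∧
    (∀ i : Fin (m + 1), ∀ h : (i : ℕ) < m,
      Mmat m s t β₁ β₂ i ⟨(i : ℕ) + 1, by omega⟩ =
        (-1 : ℝ) ^ (β₁ + 1) * s ((i : ℕ) + 1) ^ (β₁ + 1) * t ((i : ℕ) + 1) ^ β₂) := by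
  have hFJ := StrictUpperWithSuperdiag.iterate (φ := fun B => ⁅Fmat m t - Jmat m, B⁆)
    (fun _ _ hB => hB.lie_Fmat_sub_Jmat) (lie_Fmat_sub_Jmat_Emat s t) β₂
  have hM := StrictUpperWithSuperdiag.iterate (φ := fun B => ⁅Emat m s, B⁆)
    (fun _ _ hB => hB.lie_Emat) hFJ β₁
  rw [← Function.iterate_succ_apply] at hM
  refine ⟨hM.1, fun i _ => ?_⟩
  rw [Mmat, hM.2 i _ rfl]
  simp only [Pi.mul_apply, Pi.pow_apply]
  ring
end

section
/- Fix m ≥ 1 and real numbers s₁,…,s_m, t₁,…,t_m, and use the matrix conventions of the context. Then for all β¹,…,β^m ∈ ℕ² (with β^p = (β^p₁, β^p₂)), the ordered matrix product M_{β¹} · M_{β²} ⋯ M_{β^m} equals (∏_{p=1}^m (−1)^{β^p₁+1} s_p^{β^p₁+1} t_p^{β^p₂}) · Q, where Q is the matrix whose only nonzero entry is Q_{0,m} = 1. -/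
namespace MmatAux

/-- strictly upper triangular -/
def SU (m : ℕ) (A : Matrix (Fin (m+1)) (Fin (m+1)) ℝ) : Prop :=
  ∀ i j : Fin (m+1), (j:ℕ) ≤ (i:ℕ) → A i j = 0

variable {m : ℕ} {s t : ℕ → ℝ}

lemma lie_diag (d : Fin (m+1) → ℝ) (B : Matrix (Fin (m+1)) (Fin (m+1)) ℝ) (i j : Fin (m+1)) :
    ⁅Matrix.diagonal d, B⁆ i j = (d i - d j) * B i j := by
  simp [Ring.lie_def, Matrix.sub_apply, Matrix.diagonal_mul, Matrix.mul_diagonal]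
  ring

lemma Jmul_apply (B : Matrix (Fin (m+1)) (Fin (m+1)) ℝ) (i j : Fin (m+1)) :
    (Jmat m * B) i j = if h : (i:ℕ) < m then B ⟨(i:ℕ)+1, by omega⟩ j else 0 := by
  rw [Matrix.mul_apply]
  split
  · next h =>
    rw [Finset.sum_eq_single (⟨(i:ℕ)+1, by omega⟩ : Fin (m+1))]
    · simp [Jmat]
    · intro k _ hk
      have : (k:ℕ) ≠ (i:ℕ)+1 := fun hc => hk (Fin.ext hc)
      simp [Jmat, this]
    · simp
  · next h =>
    apply Finset.sum_eq_zero
    intro k _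
    have : (k:ℕ) ≠ (i:ℕ)+1 := by omega
    simp [Jmat, this]

lemma mulJ_apply (B : Matrix (Fin (m+1)) (Fin (m+1)) ℝ) (i j : Fin (m+1)) :
    (B * Jmat m) i j = if h : 0 < (j:ℕ) then B i ⟨(j:ℕ)-1, by omega⟩ else 0 := by
  rw [Matrix.mul_apply]
  split
  · next h =>
    rw [Finset.sum_eq_single (⟨(j:ℕ)-1, by omega⟩ : Fin (m+1))]
    · have : (j:ℕ) = ((j:ℕ)-1) + 1 := by omega
      simp [Jmat, ← this]
    · intro k _ hk
      have : (j:ℕ) ≠ (k:ℕ)+1 := by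
        intro hc; exact hk (Fin.ext (show (k:ℕ) = (j:ℕ)-1 by omega))
      simp [Jmat, this]
    · simp
  · next h =>
    apply Finset.sum_eq_zero
    intro k _
    have : (j:ℕ) ≠ (k:ℕ)+1 := by omega
    simp [Jmat, this]

lemma lieJ_apply (B : Matrix (Fin (m+1)) (Fin (m+1)) ℝ) (i j : Fin (m+1)) :
    ⁅Jmat m, B⁆ i j = (if h : (i:ℕ) < m then B ⟨(i:ℕ)+1, by omega⟩ j else 0)
      - (if h : 0 < (j:ℕ) then B i ⟨(j:ℕ)-1, by omega⟩ else 0) := by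
  rw [Ring.lie_def, Matrix.sub_apply, Jmul_apply, mulJ_apply]

lemma lieFJ_apply (B : Matrix (Fin (m+1)) (Fin (m+1)) ℝ) (i j : Fin (m+1)) :
    ⁅Fmat m t - Jmat m, B⁆ i j =
      ((∑ p ∈ Finset.Icc ((i:ℕ) + 1) m, t p) - (∑ p ∈ Finset.Icc ((j:ℕ) + 1) m, t p)) * B i j
      - ((if h : (i:ℕ) < m then B ⟨(i:ℕ)+1, by omega⟩ j else 0)
        - (if h : 0 < (j:ℕ) then B i ⟨(j:ℕ)-1, by omega⟩ else 0)) := by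
  rw [show ⁅Fmat m t - Jmat m, B⁆ = ⁅Fmat m t, B⁆ - ⁅Jmat m, B⁆ by
    simp only [Ring.lie_def, sub_mul, mul_sub]; abel, Matrix.sub_apply, lieJ_apply]
  congr 1
  exact lie_diag _ B i j

lemma lieFJ_SU (B : Matrix (Fin (m+1)) (Fin (m+1)) ℝ) (hB : SU m B) :
    SU m ⁅Fmat m t - Jmat m, B⁆ := by
  intro i j hij
  rw [lieFJ_apply]
  rw [hB i j hij]
  have h1 : ∀ h : (i:ℕ) < m, B ⟨(i:ℕ)+1, by omega⟩ j = 0 := fun h => hB _ _ (by simp; omega)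
  have h2 : ∀ h : 0 < (j:ℕ), B i ⟨(j:ℕ)-1, by omega⟩ = 0 := fun h => hB _ _ (by simp; omega)
  split <;> split <;> simp_all

lemma sum_Icc_sub (u : ℕ → ℝ) {a b c : ℕ} (h : a + 1 = b) (hbc : b ≤ c + 1) :
    (∑ p ∈ Finset.Icc a c, u p) - (∑ p ∈ Finset.Icc b c, u p) = if a ≤ c then u a else 0 := by
  split
  · next hac =>
    have : Finset.Icc a c = insert a (Finset.Icc b c) := by
      ext x; simp; omega
    rw [this, Finset.sum_insert (by simp; omega)]
    ring
  · next hac =>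
    have h1 : Finset.Icc a c = ∅ := by rw [Finset.Icc_eq_empty]; omega
    have h2 : Finset.Icc b c = ∅ := by rw [Finset.Icc_eq_empty]; omega
    simp [h1, h2]

lemma lieFJ_entry (B : Matrix (Fin (m+1)) (Fin (m+1)) ℝ) (hB : SU m B) (i j : Fin (m+1))
    (hij : (j:ℕ) = (i:ℕ) + 1) :
    ⁅Fmat m t - Jmat m, B⁆ i j = t ((i:ℕ)+1) * B i j := by
  rw [lieFJ_apply]
  have him : (i:ℕ) < m := by omega
  have h1 : B ⟨(i:ℕ)+1, by omega⟩ j = 0 := hB _ _ (by simp [hij])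
  have h2 : B i ⟨(j:ℕ)-1, by omega⟩ = 0 := hB _ _ (by simp; omega)
  rw [dif_pos him, dif_pos (show 0 < (j:ℕ) by omega), h1, h2]
  rw [hij, sum_Icc_sub t rfl (by omega), if_pos (by omega)]
  ring

lemma lieE_SU (B : Matrix (Fin (m+1)) (Fin (m+1)) ℝ) (hB : SU m B) :
    SU m ⁅Emat m s, B⁆ := by
  intro i j hij
  rw [Emat, lie_diag, hB i j hij, mul_zero]

lemma lieE_entry (B : Matrix (Fin (m+1)) (Fin (m+1)) ℝ) (i j : Fin (m+1))
    (hij : (j:ℕ) = (i:ℕ) + 1) :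
    ⁅Emat m s, B⁆ i j = (-(s ((i:ℕ)+1))) * B i j := by
  rw [Emat, lie_diag]
  congr 1
  rw [hij, Finset.sum_Icc_succ_top (by omega : 1 ≤ (i:ℕ)+1)]
  ring

end MmatAux

namespace MmatAux2
open MmatAux
variable {m : ℕ} {s t : ℕ → ℝ}

lemma hE_off (m : ℕ) (s : ℕ → ℝ) (a b : Fin (m+1)) (h : (a:ℕ) ≠ (b:ℕ)) : Emat m s a b = 0 := by
  rw [Emat]
  exact Matrix.diagonal_apply_ne _ (fun hc => h (congrArg Fin.val hc))

lemma base_SU : SU m (⁅Fmat m t - Jmat m, Emat m s⁆) := by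
  intro i j hij
  rw [lieFJ_apply]
  have h1 : ∀ _ : (i:ℕ) < m, Emat m s ⟨(i:ℕ)+1, by omega⟩ j = 0 :=
    fun h => hE_off m s _ _ (by simp; omega)
  have h2 : ∀ _ : 0 < (j:ℕ), Emat m s i ⟨(j:ℕ)-1, by omega⟩ = 0 :=
    fun h => hE_off m s _ _ (by simp; omega)
  have e0 : ((∑ p ∈ Finset.Icc ((i:ℕ)+1) m, t p) - (∑ p ∈ Finset.Icc ((j:ℕ)+1) m, t p))
      * Emat m s i j = 0 := by
    by_cases hji : (j:ℕ) = (i:ℕ)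
    · rw [hji, sub_self, zero_mul]
    · rw [hE_off m s i j (by omega), mul_zero]
  rw [e0]
  split <;> split <;> simp_all

lemma base_entry (i j : Fin (m+1)) (hij : (j:ℕ) = (i:ℕ)+1) :
    ⁅Fmat m t - Jmat m, Emat m s⁆ i j = -(s ((i:ℕ)+1)) := by
  have him : (i:ℕ) < m := by omega
  rw [lieFJ_apply, dif_pos him, dif_pos (show 0 < (j:ℕ) by omega)]
  have hEij : Emat m s i j = 0 := hE_off m s i j (by omega)
  have hj' : j = ⟨(i:ℕ)+1, by omega⟩ := Fin.ext hij
  have hE1 : Emat m s ⟨(i:ℕ)+1, by omega⟩ j = ∑ p ∈ Finset.Icc 1 ((i:ℕ)+1), s p := by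
    rw [Emat, Matrix.diagonal_apply, if_pos hj'.symm]
  have hE2 : Emat m s i ⟨(j:ℕ)-1, by omega⟩ = ∑ p ∈ Finset.Icc 1 (i:ℕ), s p := by
    have : (⟨(j:ℕ)-1, by omega⟩ : Fin (m+1)) = i := Fin.ext (by simp; omega)
    rw [this, Emat, Matrix.diagonal_apply_eq]
  rw [hEij, hE1, hE2, mul_zero, Finset.sum_Icc_succ_top (by omega : 1 ≤ (i:ℕ)+1)]
  ring

lemma iterFJ_SU (n : ℕ) (B : Matrix (Fin (m+1)) (Fin (m+1)) ℝ) (hB : SU m B) :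
    SU m ((fun B => ⁅Fmat m t - Jmat m, B⁆)^[n] B) := by
  induction n with
  | zero => simpa
  | succ n ih => rw [Function.iterate_succ_apply']; exact lieFJ_SU _ ih

lemma iterFJ_entry (n : ℕ) (B : Matrix (Fin (m+1)) (Fin (m+1)) ℝ) (hB : SU m B)
    (i j : Fin (m+1)) (hij : (j:ℕ) = (i:ℕ)+1) :
    ((fun B => ⁅Fmat m t - Jmat m, B⁆)^[n] B) i j = t ((i:ℕ)+1) ^ n * B i j := by
  induction n with
  | zero => simp
  | succ n ih =>
    rw [Function.iterate_succ_apply', lieFJ_entry _ (iterFJ_SU n B hB) i j hij, ih]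
    ring

lemma iterE_SU (n : ℕ) (B : Matrix (Fin (m+1)) (Fin (m+1)) ℝ) (hB : SU m B) :
    SU m ((fun B => ⁅Emat m s, B⁆)^[n] B) := by
  induction n with
  | zero => simpa
  | succ n ih => rw [Function.iterate_succ_apply']; exact lieE_SU _ ih

lemma iterE_entry (n : ℕ) (B : Matrix (Fin (m+1)) (Fin (m+1)) ℝ)
    (i j : Fin (m+1)) (hij : (j:ℕ) = (i:ℕ)+1) :
    ((fun B => ⁅Emat m s, B⁆)^[n] B) i j = (-(s ((i:ℕ)+1))) ^ n * B i j := by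
  induction n with
  | zero => simp
  | succ n ih =>
    rw [Function.iterate_succ_apply', lieE_entry _ i j hij, ih]
    ring

lemma Mmat_SU (β₁ β₂ : ℕ) : SU m (Mmat m s t β₁ β₂) := by
  rw [Mmat, Function.iterate_succ_apply]
  exact iterE_SU _ _ (iterFJ_SU _ _ base_SU)

lemma Mmat_entry (β₁ β₂ : ℕ) (i j : Fin (m+1)) (hij : (j:ℕ) = (i:ℕ)+1) :
    Mmat m s t β₁ β₂ i j
      = (-1:ℝ) ^ (β₁+1) * s ((i:ℕ)+1) ^ (β₁+1) * t ((i:ℕ)+1) ^ β₂ := by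
  rw [Mmat, Function.iterate_succ_apply,
      iterE_entry β₁ _ i j hij,
      iterFJ_entry β₂ _ base_SU i j hij,
      base_entry i j hij]
  ring

lemma prod_SU (L : List (Matrix (Fin (m+1)) (Fin (m+1)) ℝ)) (h : ∀ A ∈ L, SU m A)
    (i j : Fin (m+1)) (hij : (j:ℕ) < (i:ℕ) + L.length) : L.prod i j = 0 := by
  induction L generalizing i with
  | nil =>
    simp at hij
    rw [List.prod_nil, Matrix.one_apply_ne (by intro hc; rw [hc] at hij; omega)]
  | cons A L ih =>
    rw [List.prod_cons, Matrix.mul_apply]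
    apply Finset.sum_eq_zero
    intro k _
    by_cases hk : (k:ℕ) ≤ (i:ℕ)
    · rw [h A (by simp) i k hk, zero_mul]
    · rw [ih (fun B hB => h B (by simp [hB])) k (by simp at hij ⊢; omega), mul_zero]

lemma prod_entry (g : ℕ → Matrix (Fin (m+1)) (Fin (m+1)) ℝ) (c : ℕ → ℝ)
    (hSU : ∀ p, SU m (g p))
    (hc : ∀ (p : ℕ) (i j : Fin (m+1)), (i:ℕ) = p → (j:ℕ) = p + 1 → g p i j = c p) :
    ∀ (n k : ℕ) (i j : Fin (m+1)), (i:ℕ) = k → (j:ℕ) = k + n →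
      (List.ofFn fun p : Fin n => g (k + (p:ℕ))).prod i j = ∏ p : Fin n, c (k + (p:ℕ)) := by
  intro n
  induction n with
  | zero =>
    intro k i j hi hj
    have : i = j := Fin.ext (by omega)
    simp [this, Matrix.one_apply_eq]
  | succ n ih =>
    intro k i j hi hj
    have hk1 : k + 1 < m + 1 := by omega
    rw [List.ofFn_succ, List.prod_cons, Matrix.mul_apply]
    have htail : (List.ofFn fun p : Fin n => g (k + ((p.succ : Fin (n+1)):ℕ)))
        = List.ofFn fun p : Fin n => g ((k+1) + (p:ℕ)) := by
      congr 1
      funext p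
      have : k + ((p.succ : Fin (n+1)):ℕ) = (k+1) + (p:ℕ) := by
        simp only [Fin.val_succ]; omega
      rw [this]
    have hj2 : (j:ℕ) = (k+1) + n := by omega
    rw [Finset.sum_eq_single (⟨k+1, hk1⟩ : Fin (m+1))]
    · rw [htail, ih (k+1) ⟨k+1, hk1⟩ j rfl hj2]
      have h0 : g (k + ((0 : Fin (n+1)):ℕ)) i ⟨k+1, hk1⟩ = c k := by
        simpa using hc k i ⟨k+1, hk1⟩ (by omega) rfl
      have hc0 : c (k + ((0 : Fin (n+1)):ℕ)) = c k := by norm_num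
      rw [h0, Fin.prod_univ_succ, hc0]
      congr 1
      exact Finset.prod_congr rfl
        (fun p _ => congrArg c (by rw [Fin.val_succ]; omega))
    · intro k' _ hk'
      by_cases hkk : (k':ℕ) ≤ (i:ℕ)
      · rw [hSU _ i k' hkk, zero_mul]
      · have hk2 : k + 2 ≤ (k':ℕ) := by
          rcases Nat.lt_or_ge (k':ℕ) (k+2) with h | h
          · exfalso; exact hk' (Fin.ext (show (k':ℕ) = k+1 by omega))
          · exact h
        have hlt : (j:ℕ) < (k':ℕ) + (List.ofFn fun p : Fin n => g ((k+1) + (p:ℕ))).length := by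
          simp; omega
        rw [htail, prod_SU _ (by
            intro A hA
            rw [List.mem_ofFn] at hA
            obtain ⟨p, rfl⟩ := hA
            exact hSU _) k' j hlt, mul_zero]
    · intro hni
      exact absurd (Finset.mem_univ _) hni

end MmatAux2

/-- For `m ≥ 1` the ordered product `M_{β¹} ⋯ M_{β^m}` equals
`(∏_{p=1}^m (−1)^{β^p₁+1} s_p^{β^p₁+1} t_p^{β^p₂}) · Q`, where `Q` has single nonzero
entry `Q_{0,m} = 1`. -/
theorem Mmat_ordered_prod (m : ℕ) (hm : 1 ≤ m) (s t : ℕ → ℝ) (β : Fin m → ℕ × ℕ) :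
    (List.ofFn fun p : Fin m => Mmat m s t (β p).1 (β p).2).prod =
      (∏ p : Fin m,
          (-1 : ℝ) ^ ((β p).1 + 1) * s ((p : ℕ) + 1) ^ ((β p).1 + 1) *
            t ((p : ℕ) + 1) ^ (β p).2) •
        Matrix.single (0 : Fin (m + 1)) (Fin.last m) (1 : ℝ) := by
  classical
  set g : ℕ → Matrix (Fin (m+1)) (Fin (m+1)) ℝ := fun p =>
    if h : p < m then Mmat m s t (β ⟨p, h⟩).1 (β ⟨p, h⟩).2 else 0 with hg
  set c : ℕ → ℝ := fun p =>
    if h : p < m then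
      (-1:ℝ) ^ ((β ⟨p,h⟩).1+1) * s (p+1) ^ ((β ⟨p,h⟩).1+1) * t (p+1) ^ (β ⟨p,h⟩).2
    else 0 with hcdef
  have hSU : ∀ p, MmatAux.SU m (g p) := by
    intro p
    by_cases h : p < m
    · simp only [hg, dif_pos h]; exact MmatAux2.Mmat_SU _ _
    · simp only [hg, dif_neg h]; intro i j _; rfl
  have hc : ∀ (p : ℕ) (i j : Fin (m+1)), (i:ℕ) = p → (j:ℕ) = p + 1 → g p i j = c p := by
    intro p i j hi hj
    have hjm := j.isLt
    have h : p < m := by omega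
    simp only [hg, hcdef, dif_pos h]
    rw [MmatAux2.Mmat_entry _ _ i j (by omega), hi]
  have hlist : (List.ofFn fun p : Fin m => Mmat m s t (β p).1 (β p).2)
      = List.ofFn fun p : Fin m => g (0 + (p:ℕ)) := by
    congr 1
    funext p
    simp only [hg, Nat.zero_add, dif_pos p.isLt, Fin.eta]
  have hprod : ∀ p : Fin m, c (0 + (p:ℕ))
      = (-1:ℝ) ^ ((β p).1+1) * s ((p:ℕ)+1) ^ ((β p).1+1) * t ((p:ℕ)+1) ^ (β p).2 := by
    intro p
    simp only [hcdef, Nat.zero_add, dif_pos p.isLt, Fin.eta]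
  ext i j
  rw [Matrix.smul_apply, smul_eq_mul]
  by_cases hij : i = 0 ∧ j = Fin.last m
  · obtain ⟨hi0, hjl⟩ := hij
    have hi0' : (i:ℕ) = 0 := by simp [hi0]
    have hjl' : (j:ℕ) = 0 + m := by simp [hjl]
    rw [hlist, MmatAux2.prod_entry g c hSU hc m 0 i j hi0' hjl', hi0, hjl,
      Matrix.single_apply_same, mul_one]
    exact Finset.prod_congr rfl fun p _ => hprod p
  · have hz : (List.ofFn fun p : Fin m => Mmat m s t (β p).1 (β p).2).prod i j = 0 := by
      rw [hlist]
      apply MmatAux2.prod_SU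
      · intro A hA
        rw [List.mem_ofFn] at hA
        obtain ⟨p, rfl⟩ := hA
        exact hSU _
      · have hlen : (List.ofFn fun p : Fin m => g (0 + (p:ℕ))).length = m := by simp
        rw [hlen]
        have hjm := j.isLt
        by_cases hi0 : i = 0
        · have hjne : (j:ℕ) ≠ m := by
            intro hcm
            exact hij ⟨hi0, Fin.ext (by simp [hcm])⟩
          have hi0' : (i:ℕ) = 0 := by simp [hi0]
          omega
        · have : (i:ℕ) ≠ 0 := fun hcc => hi0 (Fin.ext (by simp [hcc]))
          omega
    rw [hz, Matrix.single_apply_of_ne, mul_zero]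
    intro ⟨h1, h2⟩
    exact hij ⟨h1.symm, h2.symm⟩
end

section
/- Fix m ≥ 1, real numbers s₁,…,s_m, t₁,…,t_m, λ₁, λ₂ ∈ ℝ and α₁, α₂ ∈ ℕ, and use the matrix conventions of the context. Then for all β¹,…,β^m ∈ ℕ² (with β^p = (β^p₁, β^p₂)): (λ₁·I + E)^{α₁} · (λ₂·I + F − J)^{α₂} · M_{β¹} ⋯ M_{β^m} = λ₁^{α₁} · (λ₂ + t₁ + ⋯ + t_m)^{α₂} · (∏_{p=1}^m (−1)^{β^p₁+1} s_p^{β^p₁+1} t_p^{β^p₂}) · Q, where I is the identity matrix and Q is the matrix whose only nonzero entry is Q_{0,m} = 1. -/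
lemma comm_diag_apply {n : ℕ} (d : Fin n → ℝ) (B : Matrix (Fin n) (Fin n) ℝ) (i j : Fin n) :
    ⁅Matrix.diagonal d, B⁆ i j = (d i - d j) * B i j := by
  simp [Ring.lie_def, Matrix.sub_apply, Matrix.diagonal_mul, Matrix.mul_diagonal]
  ring

lemma Jmat_mul_apply (m : ℕ) (B : Matrix (Fin (m+1)) (Fin (m+1)) ℝ) (i j : Fin (m+1)) :
    (Jmat m * B) i j = if h : (i : ℕ) + 1 ≤ m then B ⟨(i:ℕ)+1, by omega⟩ j else 0 := by
  rw [Matrix.mul_apply]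
  split
  · rename_i h
    rw [Finset.sum_eq_single (⟨(i:ℕ)+1, by omega⟩ : Fin (m+1))]
    · simp [Jmat]
    · intro k _ hk
      have : (k : ℕ) ≠ (i : ℕ) + 1 := fun hc => hk (Fin.ext hc)
      simp [Jmat, this]
    · simp
  · rename_i h
    apply Finset.sum_eq_zero
    intro k _
    have : (k : ℕ) ≠ (i : ℕ) + 1 := by omega
    simp [Jmat, this]

lemma mul_Jmat_apply (m : ℕ) (B : Matrix (Fin (m+1)) (Fin (m+1)) ℝ) (i j : Fin (m+1)) :
    (B * Jmat m) i j = if h : 1 ≤ (j : ℕ) then B i ⟨(j:ℕ)-1, by omega⟩ else 0 := by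
  rw [Matrix.mul_apply]
  split
  · rename_i h
    rw [Finset.sum_eq_single (⟨(j:ℕ)-1, by omega⟩ : Fin (m+1))]
    · have : (j:ℕ) = ((j:ℕ)-1) + 1 := by omega
      simp [Jmat, ← this]
    · intro k _ hk
      simp only [ne_eq, Fin.ext_iff] at hk
      have : (j : ℕ) ≠ (k : ℕ) + 1 := by omega
      simp [Jmat, this]
    · simp
  · rename_i h
    apply Finset.sum_eq_zero
    intro k _
    have : (j : ℕ) ≠ (k : ℕ) + 1 := by omega
    simp [Jmat, this]

/-- strictly upper triangular -/
def SU {m : ℕ} (B : Matrix (Fin (m+1)) (Fin (m+1)) ℝ) : Prop :=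
  ∀ i j : Fin (m+1), (j : ℕ) ≤ (i : ℕ) → B i j = 0

lemma comm_FJ_apply (m : ℕ) (t : ℕ → ℝ) (B : Matrix (Fin (m+1)) (Fin (m+1)) ℝ)
    (i j : Fin (m+1)) :
    ⁅Fmat m t - Jmat m, B⁆ i j =
      ((∑ p ∈ Finset.Icc ((i:ℕ)+1) m, t p) - ∑ p ∈ Finset.Icc ((j:ℕ)+1) m, t p) * B i j
      - (if h : (i : ℕ) + 1 ≤ m then B ⟨(i:ℕ)+1, by omega⟩ j else 0)
      + (if h : 1 ≤ (j : ℕ) then B i ⟨(j:ℕ)-1, by omega⟩ else 0) := by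
  have h0 : ⁅Fmat m t, B⁆ i j =
      ((∑ p ∈ Finset.Icc ((i:ℕ)+1) m, t p) - ∑ p ∈ Finset.Icc ((j:ℕ)+1) m, t p) * B i j :=
    comm_diag_apply _ B i j
  have : ⁅Fmat m t - Jmat m, B⁆ = ⁅Fmat m t, B⁆ - (Jmat m * B - B * Jmat m) := by
    simp only [sub_lie, Ring.lie_def]; noncomm_ring
  rw [this]
  simp only [Matrix.sub_apply]
  rw [h0, Jmat_mul_apply, mul_Jmat_apply]
  ring

lemma SU_comm_FJ (m : ℕ) (t : ℕ → ℝ) (B : Matrix (Fin (m+1)) (Fin (m+1)) ℝ) (hB : SU B) :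
    SU ⁅Fmat m t - Jmat m, B⁆ := by
  intro i j hij
  rw [comm_FJ_apply, hB i j hij]
  have h1 : (if h : (i : ℕ) + 1 ≤ m then B ⟨(i:ℕ)+1, by omega⟩ j else 0) = 0 := by
    split
    · exact hB _ _ (by simp; omega)
    · rfl
  have h2 : (if h : 1 ≤ (j : ℕ) then B i ⟨(j:ℕ)-1, by omega⟩ else 0) = 0 := by
    split
    · exact hB _ _ (by simp; omega)
    · rfl
  rw [h1, h2]; ring

lemma superdiag_comm_FJ (m : ℕ) (t : ℕ → ℝ) (B : Matrix (Fin (m+1)) (Fin (m+1)) ℝ)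
    (hB : SU B) (i j : Fin (m+1)) (hij : (j : ℕ) = (i : ℕ) + 1) :
    ⁅Fmat m t - Jmat m, B⁆ i j = t ((i:ℕ)+1) * B i j := by
  rw [comm_FJ_apply]
  have h1 : (if h : (i : ℕ) + 1 ≤ m then B ⟨(i:ℕ)+1, by omega⟩ j else 0) = 0 := by
    split
    · exact hB _ _ (by simp; omega)
    · rfl
  have h2 : (if h : 1 ≤ (j : ℕ) then B i ⟨(j:ℕ)-1, by omega⟩ else 0) = 0 := by
    split
    · exact hB _ _ (by simp; omega)
    · rfl
  rw [h1, h2]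
  have hj : (j : ℕ) ≤ m := by omega
  have : ((∑ p ∈ Finset.Icc ((i:ℕ)+1) m, t p) - ∑ p ∈ Finset.Icc ((j:ℕ)+1) m, t p)
      = t ((i:ℕ)+1) := by
    rw [hij]
    rw [show Finset.Icc ((i:ℕ)+1) m = Finset.Icc ((i:ℕ)+1) ((i:ℕ)+1) ∪ Finset.Icc ((i:ℕ)+2) m from ?_]
    · rw [Finset.sum_union ?_]
      · simp
      · rw [Finset.disjoint_left]; intro a ha hb; simp at ha hb; omega
    · ext a; simp; omega
  rw [this]; ring

lemma Emat_succ_sub (m : ℕ) (s : ℕ → ℝ) (n : ℕ) :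
    (∑ p ∈ Finset.Icc 1 (n+1), s p) = (∑ p ∈ Finset.Icc 1 n, s p) + s (n+1) := by
  rw [← Finset.sum_Icc_succ_top (by omega)]

lemma SU_X0 (m : ℕ) (s t : ℕ → ℝ) : SU ⁅Fmat m t - Jmat m, Emat m s⁆ := by
  intro i j hij
  rw [comm_FJ_apply]
  have hE : ∀ (a b : Fin (m+1)), (a:ℕ) ≠ (b:ℕ) → Emat m s a b = 0 := by
    intro a b hab
    exact Matrix.diagonal_apply_ne _ (fun hc => hab (by rw [hc]))
  have h1 : (if h : (i : ℕ) + 1 ≤ m then Emat m s ⟨(i:ℕ)+1, by omega⟩ j else 0) = 0 := by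
    split
    · exact hE _ _ (by simp; omega)
    · rfl
  have h2 : (if h : 1 ≤ (j : ℕ) then Emat m s i ⟨(j:ℕ)-1, by omega⟩ else 0) = 0 := by
    split
    · exact hE _ _ (by simp; omega)
    · rfl
  rw [h1, h2]
  rcases Nat.lt_or_ge (j:ℕ) (i:ℕ) with h | h
  · rw [hE i j (by omega)]; ring
  · have : i = j := Fin.ext (by omega)
    subst this; ring

lemma superdiag_X0 (m : ℕ) (s t : ℕ → ℝ) (i j : Fin (m+1)) (hij : (j : ℕ) = (i : ℕ) + 1) :
    ⁅Fmat m t - Jmat m, Emat m s⁆ i j = -s ((i:ℕ)+1) := by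
  rw [comm_FJ_apply]
  have hE : ∀ (a b : Fin (m+1)), (a:ℕ) ≠ (b:ℕ) → Emat m s a b = 0 := by
    intro a b hab
    exact Matrix.diagonal_apply_ne _ (fun hc => hab (by rw [hc]))
  have hij' : Emat m s i j = 0 := hE _ _ (by omega)
  have him : (i:ℕ) + 1 ≤ m := by omega
  have h1 : (if h : (i : ℕ) + 1 ≤ m then Emat m s ⟨(i:ℕ)+1, by omega⟩ j else 0)
      = ∑ p ∈ Finset.Icc 1 ((i:ℕ)+1), s p := by
    rw [dif_pos him]
    have : (⟨(i:ℕ)+1, by omega⟩ : Fin (m+1)) = j := Fin.ext (by simp [hij])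
    rw [this]
    have := Matrix.diagonal_apply_eq (fun i : Fin (m+1) => ∑ p ∈ Finset.Icc 1 (i : ℕ), s p) j
    rw [show Emat m s j j = ∑ p ∈ Finset.Icc 1 ((j:ℕ)), s p from this, hij]
  have h2 : (if h : 1 ≤ (j : ℕ) then Emat m s i ⟨(j:ℕ)-1, by omega⟩ else 0)
      = ∑ p ∈ Finset.Icc 1 ((i:ℕ)), s p := by
    rw [dif_pos (by omega)]
    have : (⟨(j:ℕ)-1, by omega⟩ : Fin (m+1)) = i := Fin.ext (by simp; omega)
    rw [this]
    exact Matrix.diagonal_apply_eq _ i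
  rw [h1, h2, hij', Emat_succ_sub m s]
  ring

lemma X_props (m : ℕ) (s t : ℕ → ℝ) (k : ℕ) :
    SU ((fun B => ⁅Fmat m t - Jmat m, B⁆)^[k] ⁅Fmat m t - Jmat m, Emat m s⁆) ∧
    ∀ i j : Fin (m+1), (j : ℕ) = (i : ℕ) + 1 →
      ((fun B => ⁅Fmat m t - Jmat m, B⁆)^[k] ⁅Fmat m t - Jmat m, Emat m s⁆) i j
        = -s ((i:ℕ)+1) * t ((i:ℕ)+1) ^ k := by
  induction k with
  | zero => exact ⟨SU_X0 m s t, fun i j hij => by simpa using superdiag_X0 m s t i j hij⟩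
  | succ k ih =>
    rw [Function.iterate_succ_apply']
    refine ⟨SU_comm_FJ m t _ ih.1, fun i j hij => ?_⟩
    rw [superdiag_comm_FJ m t _ ih.1 i j hij, ih.2 i j hij]
    ring

lemma SU_Mmat (m : ℕ) (s t : ℕ → ℝ) (β₁ β₂ : ℕ) : SU (Mmat m s t β₁ β₂) ∧
    ∀ i j : Fin (m+1), (j : ℕ) = (i : ℕ) + 1 →
      Mmat m s t β₁ β₂ i j = (-1 : ℝ)^(β₁+1) * s ((i:ℕ)+1)^(β₁+1) * t ((i:ℕ)+1) ^ β₂ := by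
  have hbase := X_props m s t β₂
  rw [Mmat, Function.iterate_succ_apply]
  induction β₁ with
  | zero =>
    refine ⟨hbase.1, fun i j hij => ?_⟩
    simp only [Function.iterate_zero, id_eq]
    rw [hbase.2 i j hij]; ring
  | succ b ih =>
    rw [Function.iterate_succ_apply']
    constructor
    · intro i j hij
      have h0 : ⁅Emat m s, (fun B => ⁅Emat m s, B⁆)^[b]
          ((fun B => ⁅Fmat m t - Jmat m, B⁆)^[β₂] ⁅Fmat m t - Jmat m, Emat m s⁆)⁆ i j
          = ((∑ p ∈ Finset.Icc 1 (i:ℕ), s p) - ∑ p ∈ Finset.Icc 1 (j:ℕ), s p) * _ :=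
        comm_diag_apply _ _ i j
      rw [h0, ih.1 i j hij]; ring
    · intro i j hij
      have h0 : ⁅Emat m s, (fun B => ⁅Emat m s, B⁆)^[b]
          ((fun B => ⁅Fmat m t - Jmat m, B⁆)^[β₂] ⁅Fmat m t - Jmat m, Emat m s⁆)⁆ i j
          = ((∑ p ∈ Finset.Icc 1 (i:ℕ), s p) - ∑ p ∈ Finset.Icc 1 (j:ℕ), s p) * _ :=
        comm_diag_apply _ _ i j
      rw [h0, ih.2 i j hij, hij, Emat_succ_sub m s]
      ring

lemma prod_partial (m : ℕ) (A : Fin m → Matrix (Fin (m+1)) (Fin (m+1)) ℝ)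
    (hSU : ∀ p, SU (A p)) (c : Fin m → ℝ)
    (hc : ∀ p : Fin m, ∀ i j : Fin (m+1), (i:ℕ) = (p:ℕ) → (j:ℕ) = (p:ℕ)+1 → A p i j = c p) :
    ∀ k (h : k ≤ m),
      (∀ i j : Fin (m+1), (j:ℕ) < (i:ℕ) + k →
        (List.ofFn fun p : Fin k => A (Fin.castLE h p)).prod i j = 0) ∧
      (∀ j : Fin (m+1), (j:ℕ) = k →
        (List.ofFn fun p : Fin k => A (Fin.castLE h p)).prod 0 j
          = ∏ p : Fin k, c (Fin.castLE h p)) := by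
  intro k
  induction k with
  | zero =>
    intro h
    constructor
    · intro i j hij
      simp only [List.ofFn_zero, List.prod_nil]
      exact Matrix.one_apply_ne (fun hc => by rw [hc] at hij; omega)
    · intro j hj
      have : j = 0 := Fin.ext (by simpa using hj)
      subst this
      simp
  | succ k ih =>
    intro h
    have h' : k ≤ m := by omega
    have hlist : (List.ofFn fun p : Fin (k+1) => A (Fin.castLE h p))
        = (List.ofFn fun p : Fin k => A (Fin.castLE h' p)).concat
            (A (Fin.castLE h (Fin.last k))) := by
      rw [List.ofFn_succ']
      rfl
    rw [hlist, List.prod_concat]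
    obtain ⟨ihz, ihv⟩ := ih h'
    constructor
    · intro i j hij
      rw [Matrix.mul_apply]
      apply Finset.sum_eq_zero
      intro l _
      rcases Nat.lt_or_ge (l:ℕ) ((i:ℕ) + k) with hl | hl
      · rw [ihz i l hl]; ring
      · rw [hSU _ l j (by omega)]; ring
    · intro j hj
      rw [Matrix.mul_apply]
      rw [Finset.sum_eq_single (⟨k, by omega⟩ : Fin (m+1))]
      · rw [ihv ⟨k, by omega⟩ (by simp),
           hc (Fin.castLE h (Fin.last k)) ⟨k, by omega⟩ j (by simp) (by simp [hj])]
        rw [Fin.prod_univ_castSucc]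
        rfl
      · intro l _ hl
        rcases Nat.lt_or_ge (l:ℕ) k with h2 | h2
        · rw [ihz 0 l (by omega)]; ring
        · have : (l:ℕ) ≠ k := fun hc => hl (Fin.ext (by simpa using hc))
          rw [hSU _ l j (by omega)]; ring
      · simp

lemma pow_mul_smul {n : ℕ} (X G : Matrix (Fin n) (Fin n) ℝ) (μ : ℝ)
    (h : X * G = μ • G) (α : ℕ) : X ^ α * G = μ ^ α • G := by
  induction α with
  | zero => simp
  | succ a ih =>
    rw [pow_succ, mul_assoc, h, Matrix.mul_smul, ih, smul_smul, pow_succ]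
    ring_nf

/-- For `m ≥ 1`,
`(λ₁·I + E)^{α₁} (λ₂·I + F − J)^{α₂} M_{β¹} ⋯ M_{β^m}` equals
`λ₁^{α₁} (λ₂ + t₁ + ⋯ + t_m)^{α₂} (∏_{p=1}^m (−1)^{β^p₁+1} s_p^{β^p₁+1} t_p^{β^p₂}) · Q`. -/
theorem Mmat_ordered_prod_with_diag (m : ℕ) (hm : 1 ≤ m) (s t : ℕ → ℝ)
    (lam₁ lam₂ : ℝ) (α₁ α₂ : ℕ) (β : Fin m → ℕ × ℕ) :
    (lam₁ • (1 : Matrix (Fin (m + 1)) (Fin (m + 1)) ℝ) + Emat m s) ^ α₁ *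
        (lam₂ • (1 : Matrix (Fin (m + 1)) (Fin (m + 1)) ℝ) + Fmat m t - Jmat m) ^ α₂ *
        (List.ofFn fun p : Fin m => Mmat m s t (β p).1 (β p).2).prod =
      (lam₁ ^ α₁ * (lam₂ + ∑ p ∈ Finset.Icc 1 m, t p) ^ α₂ *
          ∏ p : Fin m,
            (-1 : ℝ) ^ ((β p).1 + 1) * s ((p : ℕ) + 1) ^ ((β p).1 + 1) *
              t ((p : ℕ) + 1) ^ (β p).2) •
        Matrix.single (0 : Fin (m + 1)) (Fin.last m) (1 : ℝ) := by
  set G : Matrix (Fin (m+1)) (Fin (m+1)) ℝ :=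
    Matrix.single (0 : Fin (m + 1)) (Fin.last m) (1 : ℝ) with hG
  set c : Fin m → ℝ := fun p =>
    (-1 : ℝ) ^ ((β p).1 + 1) * s ((p : ℕ) + 1) ^ ((β p).1 + 1) * t ((p : ℕ) + 1) ^ (β p).2
    with hcdef
  set A : Fin m → Matrix (Fin (m+1)) (Fin (m+1)) ℝ :=
    fun p => Mmat m s t (β p).1 (β p).2 with hAdef
  have hSU : ∀ p, SU (A p) := fun p => (SU_Mmat m s t (β p).1 (β p).2).1
  have hc : ∀ p : Fin m, ∀ i j : Fin (m+1), (i:ℕ) = (p:ℕ) → (j:ℕ) = (p:ℕ)+1 → A p i j = c p := by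
    intro p i j hi hj
    show Mmat m s t (β p).1 (β p).2 i j = _
    rw [(SU_Mmat m s t (β p).1 (β p).2).2 i j (by omega), hi]
  obtain ⟨hz, hv⟩ := prod_partial m A hSU c hc m (le_refl m)
  have hprod : (List.ofFn fun p : Fin m => Mmat m s t (β p).1 (β p).2).prod
      = (∏ p : Fin m, c p) • G := by
    have hA : (List.ofFn fun p : Fin m => A (Fin.castLE (le_refl m) p))
        = List.ofFn fun p : Fin m => Mmat m s t (β p).1 (β p).2 := rfl
    rw [← hA]
    ext i j
    by_cases hij : (i : ℕ) = 0 ∧ (j : ℕ) = m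
    · have hi : i = 0 := Fin.ext (by simpa using hij.1)
      have hj : j = Fin.last m := Fin.ext (by simpa using hij.2)
      subst hi; subst hj
      rw [hv (Fin.last m) (by simp)]
      simp [hG]
    · have hjlt : (j : ℕ) < (i : ℕ) + m := by
        have := j.isLt
        have := i.isLt
        omega
      rw [hz i j hjlt]
      have : G i j = 0 := by
        apply Matrix.single_apply_of_ne
        intro hco
        exact hij ⟨by rw [← hco.1]; rfl, by rw [← hco.2]; simp⟩
      simp [this]
  have hX1 : (lam₁ • (1 : Matrix (Fin (m+1)) (Fin (m+1)) ℝ) + Emat m s) * G = lam₁ • G := by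
    rw [Matrix.add_mul, Matrix.smul_mul, Matrix.one_mul]
    have : Emat m s * G = 0 := by
      ext i j
      rw [show (Emat m s * G) i j = (∑ p ∈ Finset.Icc 1 (i:ℕ), s p) * G i j from
        Matrix.diagonal_mul ..]
      by_cases hi : i = 0
      · subst hi; simp
      · have : G i j = 0 := by
          apply Matrix.single_apply_of_ne
          intro hco; exact hi hco.1.symm
        simp [this]
    rw [this, add_zero]
  have hX2 : (lam₂ • (1 : Matrix (Fin (m+1)) (Fin (m+1)) ℝ) + Fmat m t - Jmat m) * G
      = (lam₂ + ∑ p ∈ Finset.Icc 1 m, t p) • G := by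
    rw [Matrix.sub_mul, Matrix.add_mul, Matrix.smul_mul, Matrix.one_mul]
    have hF : Fmat m t * G = (∑ p ∈ Finset.Icc 1 m, t p) • G := by
      ext i j
      rw [show (Fmat m t * G) i j = (∑ p ∈ Finset.Icc ((i:ℕ)+1) m, t p) * G i j from
        Matrix.diagonal_mul ..]
      by_cases hi : i = 0
      · subst hi; simp
      · have : G i j = 0 := by
          apply Matrix.single_apply_of_ne
          intro hco; exact hi hco.1.symm
        simp [this]
    have hJ : Jmat m * G = 0 := by
      ext i j
      rw [Jmat_mul_apply]
      split
      · apply Matrix.single_apply_of_ne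
        intro hco
        have := congrArg Fin.val hco.1
        simp at this
      · simp
    rw [hF, hJ, sub_zero, add_smul]
  rw [hprod, mul_assoc, Matrix.mul_smul, pow_mul_smul _ _ _ hX2, Matrix.mul_smul, Matrix.mul_smul,
    pow_mul_smul _ _ _ hX1, smul_smul, smul_smul]
  congr 1
  ring
end

section
/- Let (X_n)_{n∈ℕ} and (Y_m)_{m∈ℕ} be families of Fréchet spaces (complete metrizable locally convex real topological vector spaces), and let ψ_{nm} : X_n → Y_m be continuous linear maps such that ψ_{nm} = 0 whenever n > m and ψ_{mm} is topologically injective for every m. Then the induced continuous linear map Φ : ∏_{n∈ℕ} X_n → ∏_{m∈ℕ} Y_m defined by Φ(x)_m = ∑_{n=0}^{m} ψ_{nm}(x_n) is topologically injective. -/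
/-- Type synonym for the domain of `f`, equipped with the topology induced by `f`. -/
def InducedDom {α : Type*} {β : Type*} (f : α → β) : Type _ := α

instance InducedDom.topologicalSpace {α β : Type*} [TopologicalSpace β] (f : α → β) :
    TopologicalSpace (InducedDom f) :=
  TopologicalSpace.induced (fun x : InducedDom f => f x) inferInstance

/-- Let `(X_n)` and `(Y_m)` be Fréchet spaces (complete metrizable
locally convex real topological vector spaces) and `ψ_{nm} : X_n → Y_m` continuous linear
maps with `ψ_{nm} = 0` for `n > m` and `ψ_{mm}` topologically injective for every `m`.
Then the induced map `Φ : ∏ X_n → ∏ Y_m`, `Φ(x)_m = ∑_{n ≤ m} ψ_{nm}(x_n)`, is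
topologically injective. -/
theorem isEmbedding_triangular_pi_map
    (X Y : ℕ → Type*)
    [∀ n, AddCommGroup (X n)] [∀ n, Module ℝ (X n)] [∀ n, UniformSpace (X n)]
    [∀ n, IsUniformAddGroup (X n)] [∀ n, ContinuousSMul ℝ (X n)]
    [∀ n, CompleteSpace (X n)] [∀ n, LocallyConvexSpace ℝ (X n)]
    [∀ n, TopologicalSpace.MetrizableSpace (X n)]
    [∀ m, AddCommGroup (Y m)] [∀ m, Module ℝ (Y m)] [∀ m, UniformSpace (Y m)]
    [∀ m, IsUniformAddGroup (Y m)] [∀ m, ContinuousSMul ℝ (Y m)]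
    [∀ m, CompleteSpace (Y m)] [∀ m, LocallyConvexSpace ℝ (Y m)]
    [∀ m, TopologicalSpace.MetrizableSpace (Y m)]
    (ψ : ∀ n m : ℕ, X n →L[ℝ] Y m)
    (hzero : ∀ n m : ℕ, m < n → ψ n m = 0)
    (hemb : ∀ m : ℕ, Topology.IsEmbedding (ψ m m)) :
    Topology.IsEmbedding
      (fun x : ∀ n, X n => fun m => ∑ n ∈ Finset.range (m + 1), ψ n m (x n)) := by
  set Φ : (∀ n, X n) → (∀ m, Y m) :=
    fun x m => ∑ n ∈ Finset.range (m + 1), ψ n m (x n) with hΦ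
  have hcont : Continuous Φ :=
    continuous_pi fun m => continuous_finset_sum _ fun n _ =>
      (ψ n m).continuous.comp (continuous_apply n)
  have hinj : Function.Injective Φ := by
    intro x y hxy
    funext m
    induction m using Nat.strong_induction_on with
    | _ m ih =>
      have hm : Φ x m = Φ y m := congrFun hxy m
      simp only [hΦ, Finset.sum_range_succ] at hm
      have hsum : ∑ n ∈ Finset.range m, ψ n m (x n)
          = ∑ n ∈ Finset.range m, ψ n m (y n) :=
        Finset.sum_congr rfl fun n hn => by rw [ih n (Finset.mem_range.mp hn)]
      rw [hsum] at hm
      exact (hemb m).injective (add_left_cancel hm)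
  have key : ∀ m, Continuous (fun x : InducedDom Φ => (x : ∀ n, X n) m) := by
    intro m
    induction m using Nat.strong_induction_on with
    | _ m ih =>
      have h0 : Continuous (fun x : InducedDom Φ => Φ x) := continuous_induced_dom
      have h1 : Continuous (fun x : InducedDom Φ => Φ x m) :=
        (continuous_apply m).comp h0
      have h2 : Continuous
          (fun x : InducedDom Φ => ∑ n ∈ Finset.range m, ψ n m ((x : ∀ n, X n) n)) :=
        continuous_finset_sum _ fun n hn =>
          (ψ n m).continuous.comp (ih n (Finset.mem_range.mp hn))
      have h3 : Continuous (fun x : InducedDom Φ => ψ m m ((x : ∀ n, X n) m)) := by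
        have he : (fun x : InducedDom Φ => ψ m m ((x : ∀ n, X n) m))
            = fun x : InducedDom Φ =>
              Φ x m - ∑ n ∈ Finset.range m, ψ n m ((x : ∀ n, X n) n) := by
          funext x
          simp only [hΦ]
          rw [Finset.sum_range_succ, add_sub_cancel_left]
        rw [he]
        exact h1.sub h2
      exact (hemb m).isInducing.continuous_iff.mpr h3
  have hid : Continuous (fun x : InducedDom Φ => fun m => (x : ∀ n, X n) m) :=
    continuous_pi key
  have h4 : TopologicalSpace.induced
        (fun x : InducedDom Φ => fun m => (x : ∀ n, X n) m) Pi.topologicalSpace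
      = (Pi.topologicalSpace : TopologicalSpace (∀ n, X n)) :=
    @induced_id (InducedDom Φ) Pi.topologicalSpace
  have hle : TopologicalSpace.induced Φ inferInstance
      ≤ (Pi.topologicalSpace : TopologicalSpace (∀ n, X n)) :=
    h4 ▸ continuous_iff_le_induced.mp hid
  exact ⟨⟨le_antisymm (continuous_iff_le_induced.mp hcont) hle⟩, hinj⟩
end

section
/- Let B be a complex unital Banach algebra, b ∈ B, and suppose there are K > 0 and α ≥ 0 such that ‖exp(i s b)‖ ≤ K (1+|s|)^α for all s ∈ ℝ, where exp is the Banach-algebra exponential and i = Complex.I. Let D : B → B be the inner derivation D(x) = b·x − x·b, a continuous linear operator on B (D = mulLeft b − mulRight b). Then ‖exp(i s D)‖ ≤ K² (1+|s|)^{2α} for all s ∈ ℝ, where the exponential is taken in the Banach algebra of continuous linear operators on B and the norm is the operator norm. (This is the content of the paper's Lemma that if b is of polynomial growth, then so is ad b; the key identity is exp(i s · ad b)(x) = exp(i s b) · x · exp(−i s b).) -/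
open NormedSpace

/-- Left multiplication as an algebra hom into continuous endomorphisms. -/
noncomputable def mulLeftAlgHom (B : Type*) [NormedRing B] [NormedAlgebra ℂ B] :
    B →ₐ[ℂ] (B →L[ℂ] B) where
  toFun := ContinuousLinearMap.mul ℂ B
  map_one' := by ext x; simp
  map_mul' a b := by ext x; simp [mul_assoc]
  map_zero' := by ext x; simp
  map_add' a b := by ext x; simp [add_mul]
  commutes' c := by
    ext x
    show algebraMap ℂ B c * x = _
    rw [Algebra.algebraMap_eq_smul_one]
    show (c • (1:B)) * x = algebraMap ℂ (B →L[ℂ] B) c x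
    rw [smul_mul_assoc, one_mul]
    rfl

/-- Right multiplication as an algebra hom from the opposite algebra. -/
noncomputable def mulRightAlgHom (B : Type*) [NormedRing B] [NormedAlgebra ℂ B] :
    Bᵐᵒᵖ →ₐ[ℂ] (B →L[ℂ] B) where
  toFun a := (ContinuousLinearMap.mul ℂ B).flip a.unop
  map_one' := by ext x; simp
  map_mul' a b := by ext x; simp [mul_assoc]
  map_zero' := by ext x; simp
  map_add' a b := by ext x; simp [mul_add]
  commutes' c := by
    ext x
    show x * (algebraMap ℂ Bᵐᵒᵖ c).unop = _
    rw [MulOpposite.algebraMap_apply, MulOpposite.unop_op, Algebra.algebraMap_eq_smul_one,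
      mul_smul_comm, mul_one]
    rfl

/-- Let `B` be a complex unital Banach algebra and `b ∈ B` with
`‖exp(i s b)‖ ≤ K (1+|s|)^α` for all real `s` (where `K > 0`, `α ≥ 0`). Let `D` be the
inner derivation `x ↦ b·x − x·b`, a continuous linear operator on `B`. Then
`‖exp(i s D)‖ ≤ K² (1+|s|)^{2α}` for all real `s`, with the exponential taken in the
Banach algebra of continuous linear operators on `B` and the operator norm. -/
theorem ad_polynomial_growth
    {B : Type*} [NormedRing B] [NormedAlgebra ℂ B] [CompleteSpace B]
    (b : B) (K α : ℝ) (hK : 0 < K) (hα : 0 ≤ α)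
    (hb : ∀ s : ℝ, ‖NormedSpace.exp ((Complex.I * (s : ℂ)) • b)‖ ≤ K * (1 + |s|) ^ α)
    (D : B →L[ℂ] B) (hD : ∀ x : B, D x = b * x - x * b) :
    ∀ s : ℝ, ‖NormedSpace.exp ((Complex.I * (s : ℂ)) • D)‖ ≤
      K ^ 2 * (1 + |s|) ^ (2 * α) := by
  intro s
  let +nondep : NormedAlgebra ℚ B := .restrictScalars ℚ ℂ B
  let +nondep : NormedAlgebra ℚ Bᵐᵒᵖ := .restrictScalars ℚ ℂ Bᵐᵒᵖ
  let +nondep : NormedAlgebra ℚ (B →L[ℂ] B) := .restrictScalars ℚ ℂ (B →L[ℂ] B)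
  set c : ℂ := Complex.I * (s : ℂ) with hc
  set L : B →L[ℂ] B := mulLeftAlgHom B b with hL
  set R : B →L[ℂ] B := mulRightAlgHom B (MulOpposite.op b) with hR
  have hφcont : Continuous (mulLeftAlgHom B) := (ContinuousLinearMap.mul ℂ B).continuous
  have hψcont : Continuous (mulRightAlgHom B) :=
    (ContinuousLinearMap.mul ℂ B).flip.continuous.comp MulOpposite.continuous_unop
  have hDLR : D = L - R := by
    ext x
    simp [hD x, hL, hR, mulLeftAlgHom, mulRightAlgHom]
  have hcomm0 : Commute L R := by
    ext x
    simp [hL, hR, mulLeftAlgHom, mulRightAlgHom, ContinuousLinearMap.mul_apply', mul_assoc]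
  have hcomm : Commute (c • L) (-(c • R)) := by
    show _ * _ = _ * _
    ext x
    have h := ContinuousLinearMap.ext_iff.mp hcomm0 x
    simp only [ContinuousLinearMap.mul_apply] at h ⊢
    simp only [ContinuousLinearMap.neg_apply, ContinuousLinearMap.smul_apply, map_neg,
      map_smul, smul_neg, smul_smul, h]
  have hsplit : c • D = c • L + -(c • R) := by
    rw [hDLR, smul_sub, sub_eq_add_neg]
  have hexpL : exp (c • L) = mulLeftAlgHom B (exp (c • b)) := by
    rw [hL, ← map_smul, ← map_exp (mulLeftAlgHom B) hφcont]
  have hexpR : exp (-(c • R)) =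
      mulRightAlgHom B (MulOpposite.op (exp ((Complex.I * (-s : ℂ)) • b))) := by
    rw [hR, ← map_smul, ← map_neg, ← map_exp (mulRightAlgHom B) hψcont, ← exp_op]
    congr 1
    rw [← MulOpposite.op_smul, ← MulOpposite.op_neg, ← neg_smul]
    congr 1
    rw [hc]
    push_cast
    ring
  have key : exp (c • D) = exp (c • L) * exp (-(c • R)) := by
    rw [hsplit, exp_add_of_commute hcomm]
  rw [key, hexpL, hexpR]
  have h1 : ‖mulLeftAlgHom B (exp (c • b))‖ ≤ ‖exp (c • b)‖ :=
    ContinuousLinearMap.opNorm_mul_apply_le ℂ B _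
  have h2 : ‖mulRightAlgHom B (MulOpposite.op (exp ((Complex.I * (-s : ℂ)) • b)))‖ ≤
      ‖exp ((Complex.I * (-s : ℂ)) • b)‖ := by
    apply ContinuousLinearMap.opNorm_le_bound _ (norm_nonneg _)
    intro x
    show ‖x * _‖ ≤ _
    rw [mul_comm ‖_‖ ‖x‖]
    exact norm_mul_le _ _
  have hbneg : ‖exp ((Complex.I * (-s : ℂ)) • b)‖ ≤ K * (1 + |s|) ^ α := by
    have := hb (-s)
    rw [abs_neg] at this
    convert this using 3
    push_cast
    ring
  calc ‖mulLeftAlgHom B (exp (c • b)) *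
        mulRightAlgHom B (MulOpposite.op (exp ((Complex.I * (-s : ℂ)) • b)))‖
      ≤ ‖exp (c • b)‖ * ‖exp ((Complex.I * (-s : ℂ)) • b)‖ :=
        (norm_mul_le _ _).trans (mul_le_mul h1 h2 (norm_nonneg _) (norm_nonneg _))
    _ ≤ (K * (1 + |s|) ^ α) * (K * (1 + |s|) ^ α) :=
        mul_le_mul (hb s) hbneg (norm_nonneg _) (le_trans (norm_nonneg _) (hb s))
    _ = K ^ 2 * (1 + |s|) ^ (2 * α) := by
        have h0 : (0:ℝ) < 1 + |s| := by positivity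
        rw [show 2 * α = α + α by ring, Real.rpow_add h0]
        ring
end
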